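/- arXiv:1003.0509 — 5 statements merged into one kernel-verified Lean document; each statement's English description precedes it below -/
import Mathlib

section
/- In the formal power series ring ℤ⟦q⟦, q·∏_{n≥1}(1-q^{9n})^3 = ∑_{n≥0} (-1)^n (2n+1) q^{(9n^2+9n)/2 + 1}. -/
open PowerSeries Finset

open Finset

namespace JacobiAux
variable {K : Type} [Field K]

def tri (j : ℤ) : ℕ := (j * (j + 1) / 2).toNat

lemma two_tri (j : ℤ) : 2 * (tri j : ℤ) = j * (j + 1) := by
  have h : (0:ℤ) ≤ j * (j + 1) := by
    rcases le_or_gt 0 j with h | h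
    · positivity
    · nlinarith
  have h2 : (tri j : ℤ) = j * (j + 1) / 2 := Int.toNat_of_nonneg (by positivity)
  rw [h2]
  exact Int.two_mul_ediv_two_of_even (Int.even_mul_succ_self j)

def fac (q : K) (n : ℕ) : K := ∏ k ∈ Finset.Ioc 0 n, (1 - q ^ k)

def qb (q : K) (n i : ℕ) : K := if i ≤ n then fac q n / (fac q i * fac q (n - i)) else 0

variable {q : K} (hq : ∀ k : ℕ, k ≠ 0 → 1 - q ^ k ≠ 0)

lemma fac_zero : fac q 0 = 1 := by simp [fac]

lemma fac_succ (n : ℕ) : fac q (n + 1) = fac q n * (1 - q ^ (n + 1)) := by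
  rw [fac, fac, ← Finset.prod_Ioc_succ_top (Nat.zero_le _)]

include hq in
lemma fac_ne_zero (n : ℕ) : fac q n ≠ 0 := by
  refine Finset.prod_ne_zero_iff.2 fun k hk => hq k ?_
  exact ((Finset.mem_Ioc.mp hk).1).ne'

include hq in
lemma qb_zero (n : ℕ) : qb q n 0 = 1 := by
  rw [qb, if_pos (Nat.zero_le n)]
  simp [fac_zero, div_self (fac_ne_zero hq n)]

include hq in
lemma qb_self (n : ℕ) : qb q n n = 1 := by
  rw [qb, if_pos le_rfl]
  simp [fac_zero, div_self (fac_ne_zero hq n)]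

lemma qb_of_gt {n i : ℕ} (h : n < i) : qb q n i = 0 := by simp [qb, Nat.not_le.mpr h]

include hq in
lemma pascal₁ (n i : ℕ) :
    qb q (n + 1) (i + 1) = qb q n (i + 1) + q ^ (n - i) * qb q n i := by
  rcases lt_trichotomy (i + 1) (n + 1) with h | h | h
  · have hin : i + 1 ≤ n := Nat.lt_succ_iff.mp h
    obtain ⟨a, rfl⟩ : ∃ a, n = i + 1 + a := ⟨n - i - 1, by omega⟩
    have e0 : i + 1 + a - i = a + 1 := by omega
    have e1 : i + 1 + a + 1 - (i + 1) = a + 1 := by omega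
    have e2 : i + 1 + a - (i + 1) = a := by omega
    rw [qb, qb, qb, if_pos (by omega), if_pos hin, if_pos (by omega), e0, e1, e2]
    have h1 := fac_ne_zero hq (i + 1 + a)
    have h2 := fac_ne_zero hq i
    have h3 := fac_ne_zero hq a
    have h4 := hq (i + 1) (by omega)
    have h5 := hq (a + 1) (by omega)
    have e3 : i + 1 + a + 1 = (i + 1 + a) + 1 := rfl
    rw [e3, fac_succ (i + 1 + a), fac_succ i, fac_succ a]
    field_simp
    ring
  · have hi : i = n := by omega
    subst hi
    rw [qb_self hq, qb_of_gt (by omega), qb_self hq]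
    simp
  · rw [qb_of_gt (by omega), qb_of_gt (by omega), qb_of_gt (by omega)]
    simp

include hq in
lemma pascal₂ (n i : ℕ) :
    qb q (n + 1) (i + 1) = q ^ (i + 1) * qb q n (i + 1) + qb q n i := by
  rcases lt_trichotomy (i + 1) (n + 1) with h | h | h
  · have hin : i + 1 ≤ n := Nat.lt_succ_iff.mp h
    obtain ⟨a, rfl⟩ : ∃ a, n = i + 1 + a := ⟨n - i - 1, by omega⟩
    have e0 : i + 1 + a - i = a + 1 := by omega
    have e1 : i + 1 + a + 1 - (i + 1) = a + 1 := by omega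
    have e2 : i + 1 + a - (i + 1) = a := by omega
    rw [qb, qb, qb, if_pos (by omega), if_pos hin, if_pos (by omega), e0, e1, e2]
    have h1 := fac_ne_zero hq (i + 1 + a)
    have h2 := fac_ne_zero hq i
    have h3 := fac_ne_zero hq a
    have h4 := hq (i + 1) (by omega)
    have h5 := hq (a + 1) (by omega)
    have e3 : i + 1 + a + 1 = (i + 1 + a) + 1 := rfl
    rw [e3, fac_succ (i + 1 + a), fac_succ i, fac_succ a]
    field_simp
    ring
  · have hi : i = n := by omega
    subst hi
    rw [qb_self hq, qb_of_gt (by omega), qb_self hq]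
    simp
  · rw [qb_of_gt (by omega), qb_of_gt (by omega), qb_of_gt (by omega)]
    simp

include hq in
lemma dp (n i : ℕ) :
    qb q (2 * n + 2) (i + 2) = q ^ (i + 2) * qb q (2 * n) (i + 2)
      + (1 + q ^ (2 * n + 1)) * qb q (2 * n) (i + 1) + q ^ (2 * n - i) * qb q (2 * n) i := by
  have h1 : qb q (2 * n + 2) (i + 2) =
      q ^ (i + 2) * qb q (2 * n + 1) (i + 2) + qb q (2 * n + 1) (i + 1) := pascal₂ hq (2*n+1) (i+1)
  have h2 : qb q (2 * n + 1) (i + 2) =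
      qb q (2 * n) (i + 2) + q ^ (2 * n - (i + 1)) * qb q (2 * n) (i + 1) := pascal₁ hq (2*n) (i+1)
  have h3 : qb q (2 * n + 1) (i + 1) =
      qb q (2 * n) (i + 1) + q ^ (2 * n - i) * qb q (2 * n) i := pascal₁ hq (2*n) i
  rw [h1, h2, h3]
  by_cases h : i + 1 ≤ 2 * n
  · have hpow : q ^ (i + 2) * q ^ (2 * n - (i + 1)) = q ^ (2 * n + 1) := by
      rw [← pow_add]; congr 1; omega
    linear_combination qb q (2 * n) (i + 1) * hpow
  · have hz : qb q (2 * n) (i + 1) = 0 := qb_of_gt (by omega)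
    rw [hz]; ring


lemma tri_succ (j : ℤ) : (tri (j + 1) : ℤ) = tri j + j + 1 := by
  have h : 2 * (tri (j+1) : ℤ) = 2 * ((tri j : ℤ) + j + 1) := by
    linear_combination two_tri (j+1) - two_tri j
  omega

def cc (q : K) (n i : ℕ) : K := q ^ tri ((i : ℤ) - n) * qb q (2 * n) i

lemma cc_of_gt {n i : ℕ} (h : 2 * n < i) : cc q n i = 0 := by
  rw [cc, qb_of_gt h, mul_zero]

include hq in
lemma cc_rec0 (n : ℕ) : cc q (n + 1) 0 = q ^ n * cc q n 0 := by
  rw [cc, cc]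
  have h2 : 2 * (n + 1) = 2 * n + 2 := by ring
  rw [h2, qb_zero hq, qb_zero hq, mul_one, mul_one, ← pow_add]
  congr 1
  have e1 : ((0:ℕ):ℤ) - ((n+1:ℕ):ℤ) = (-(n:ℤ) - 1) := by push_cast; ring
  have e2 : ((0:ℕ):ℤ) - ((n:ℕ):ℤ) = (-(n:ℤ) - 1) + 1 := by push_cast; ring
  rw [e1, e2]
  have a2 := tri_succ (-(n:ℤ) - 1)
  omega

include hq in
lemma cc_rec1 (n : ℕ) :
    cc q (n + 1) 1 = q ^ n * cc q n 1 + (1 + q ^ (2 * n + 1)) * cc q n 0 := by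
  have hqb : qb q (2 * n + 2) 1 = q * qb q (2 * n) 1 + (1 + q ^ (2 * n + 1)) * qb q (2 * n) 0 := by
    have h1 : qb q (2 * n + 2) 1 = q ^ 1 * qb q (2 * n + 1) 1 + qb q (2 * n + 1) 0 := by
      simpa using pascal₂ hq (2 * n + 1) 0
    have h2 : qb q (2 * n + 1) 1 = qb q (2 * n) 1 + q ^ (2 * n) * qb q (2 * n) 0 := by
      simpa using pascal₁ hq (2 * n) 0
    have h3 : qb q (2 * n + 1) 0 = 1 := qb_zero hq _
    have h4 : qb q (2 * n) 0 = 1 := qb_zero hq _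
    rw [h1, h2, h3, h4]
    have hp : q ^ 1 * q ^ (2 * n) = q ^ (2 * n + 1) := by
      rw [← pow_add]; congr 1; omega
    linear_combination hp
  rw [cc, cc, cc]
  have h2 : 2 * (n + 1) = 2 * n + 2 := by ring
  rw [h2, hqb]
  have e1 : ((1 : ℕ) : ℤ) - ((n + 1 : ℕ) : ℤ) = -(n : ℤ) := by push_cast; ring
  have e2 : ((1 : ℕ) : ℤ) - ((n : ℕ) : ℤ) = -(n : ℤ) + 1 := by push_cast; ring
  have e3 : ((0 : ℕ) : ℤ) - ((n : ℕ) : ℤ) = -(n : ℤ) := by push_cast; ring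
  rw [e1, e2, e3]
  have ha : tri (-(n : ℤ)) + 1 = n + tri (-(n : ℤ) + 1) := by
    have := tri_succ (-(n : ℤ)); omega
  have hp : q ^ tri (-(n : ℤ)) * q = q ^ n * q ^ tri (-(n : ℤ) + 1) := by
    rw [← pow_succ, ha, pow_add]
  linear_combination qb q (2 * n) 1 * hp

include hq in
lemma cc_rec2 (n i : ℕ) :
    cc q (n + 1) (i + 2) = q ^ n * cc q n (i + 2)
      + (1 + q ^ (2 * n + 1)) * cc q n (i + 1) + q ^ (n + 1) * cc q n i := by
  by_cases hi : i ≤ 2 * n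
  · rw [cc, cc, cc, cc]
    have h2 : 2 * (n + 1) = 2 * n + 2 := by ring
    rw [h2, dp hq n i]
    have e1 : ((i + 2 : ℕ) : ℤ) - ((n + 1 : ℕ) : ℤ) = (i : ℤ) - n + 1 := by push_cast; ring
    have e2 : ((i + 2 : ℕ) : ℤ) - ((n : ℕ) : ℤ) = (i : ℤ) - n + 2 := by push_cast; ring
    have e3 : ((i + 1 : ℕ) : ℤ) - ((n : ℕ) : ℤ) = (i : ℤ) - n + 1 := by push_cast; ring
    rw [e1, e2, e3]
    have a1 := tri_succ ((i : ℤ) - n + 1)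
    have ea : (i : ℤ) - n + 1 + 1 = (i : ℤ) - n + 2 := by ring
    rw [ea] at a1
    have a2 := tri_succ ((i : ℤ) - n)
    have hp1 : q ^ tri ((i : ℤ) - n + 1) * q ^ (i + 2) = q ^ n * q ^ tri ((i : ℤ) - n + 2) := by
      rw [← pow_add, ← pow_add]; congr 1; omega
    have hp3 : q ^ tri ((i : ℤ) - n + 1) * q ^ (2 * n - i)
        = q ^ (n + 1) * q ^ tri ((i : ℤ) - n) := by
      rw [← pow_add, ← pow_add]; congr 1; omega
    linear_combination qb q (2 * n) (i + 2) * hp1 + qb q (2 * n) i * hp3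
  · rw [cc_of_gt (by omega), cc_of_gt (by omega), cc_of_gt (by omega), cc_of_gt (by omega)]
    ring

lemma peel2 (g : ℕ → K) (M : ℕ) :
    ∑ i ∈ range (M + 2), g i = ∑ i ∈ range M, g (i + 2) + g 1 + g 0 := by
  rw [Finset.sum_range_succ' g (M + 1), Finset.sum_range_succ' (fun i => g (i + 1)) M]

include hq in
lemma sum_rec (f : ℕ → K) (n : ℕ) (hn : 1 ≤ n) :
    ∑ i ∈ range (2 * (n + 1) + 1), f i * cc q (n + 1) i
      = q ^ n * ∑ i ∈ range (2 * n + 1), f i * cc q n i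
        + (1 + q ^ (2 * n + 1)) * ∑ i ∈ range (2 * n + 1), f (i + 1) * cc q n i
        + q ^ (n + 1) * ∑ i ∈ range (2 * n + 1), f (i + 2) * cc q n i := by
  obtain ⟨m, rfl⟩ : ∃ m, n = m + 1 := ⟨n - 1, by omega⟩
  have hu : (1 : K) + q ^ (2 * (m + 1) + 1) = 1 + q ^ (2 * m + 3) := by norm_num; ring_nf
  rw [show 2 * (m + 1 + 1) + 1 = (2 * m + 3) + 2 from by ring,
    show 2 * (m + 1) + 1 = 2 * m + 3 from by ring, peel2]
  have hrec : ∀ i, f (i + 2) * cc q (m + 1 + 1) (i + 2)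
      = q ^ (m + 1) * (f (i + 2) * cc q (m + 1) (i + 2))
        + (1 + q ^ (2 * m + 3)) * (f (i + 2) * cc q (m + 1) (i + 1))
        + q ^ (m + 2) * (f (i + 2) * cc q (m + 1) i) := by
    intro i
    rw [cc_rec2 hq (m + 1) i, show 2 * (m + 1) + 1 = 2 * m + 3 from by ring]
    ring
  have hrec1 : cc q (m + 1 + 1) 1
      = q ^ (m + 1) * cc q (m + 1) 1 + (1 + q ^ (2 * m + 3)) * cc q (m + 1) 0 := by
    rw [cc_rec1 hq (m + 1), show 2 * (m + 1) + 1 = 2 * m + 3 from by ring]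
  rw [Finset.sum_congr rfl (fun i _ => hrec i), hrec1, cc_rec0 hq (m + 1)]
  rw [Finset.sum_add_distrib, Finset.sum_add_distrib, ← Finset.mul_sum, ← Finset.mul_sum,
    ← Finset.mul_sum]
  have eA : ∑ i ∈ range (2 * m + 3), f i * cc q (m + 1) i
      = ∑ i ∈ range (2 * m + 1), f (i + 2) * cc q (m + 1) (i + 2)
        + f 1 * cc q (m + 1) 1 + f 0 * cc q (m + 1) 0 := by
    rw [show 2 * m + 3 = (2 * m + 1) + 2 from rfl, peel2]
  have eA2 : ∑ i ∈ range (2 * m + 3), f (i + 2) * cc q (m + 1) (i + 2)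
      = ∑ i ∈ range (2 * m + 1), f (i + 2) * cc q (m + 1) (i + 2) := by
    rw [show 2 * m + 3 = (2 * m + 2) + 1 from rfl, Finset.sum_range_succ,
      show 2 * m + 2 = (2 * m + 1) + 1 from rfl, Finset.sum_range_succ,
      cc_of_gt (by omega), cc_of_gt (by omega)]
    ring
  have eB : ∑ i ∈ range (2 * m + 3), f (i + 1) * cc q (m + 1) i
      = ∑ i ∈ range (2 * m + 2), f (i + 1 + 1) * cc q (m + 1) (i + 1)
        + f (0 + 1) * cc q (m + 1) 0 := by
    rw [show 2 * m + 3 = (2 * m + 2) + 1 from rfl,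
      Finset.sum_range_succ' (fun i => f (i + 1) * cc q (m + 1) i) (2 * m + 2)]
  have eB2 : ∑ i ∈ range (2 * m + 3), f (i + 2) * cc q (m + 1) (i + 1)
      = ∑ i ∈ range (2 * m + 2), f (i + 1 + 1) * cc q (m + 1) (i + 1) := by
    rw [show 2 * m + 3 = (2 * m + 2) + 1 from rfl, Finset.sum_range_succ,
      cc_of_gt (by omega)]
    rw [mul_zero, add_zero]
  rw [eA, eB, eA2, eB2]
  norm_num
  ring

def VV (q : K) (n : ℕ) : K := ∑ i ∈ range (2 * n + 1), (-1 : K) ^ i * cc q n i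

def WW (q : K) (n : ℕ) : K := ∑ i ∈ range (2 * n + 1), (-1 : K) ^ i * (i : K) * cc q n i

include hq in
lemma VV_one : VV q 1 = 0 := by
  have hfac1 : fac q 1 = 1 - q := by
    rw [show (1:ℕ) = 0 + 1 from rfl, fac_succ, fac_zero, one_mul, pow_one]
  have hfac2 : fac q 2 = (1 - q) * (1 - q ^ 2) := by
    rw [show (2:ℕ) = 1 + 1 from rfl, fac_succ, hfac1]
  have h0 : cc q 1 0 = 1 := by
    rw [cc, qb_zero hq]
    norm_num
    rw [show tri (-1) = 0 from by decide, pow_zero]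
  have h1 : cc q 1 1 = fac q 2 / (fac q 1 * fac q 1) := by
    rw [cc, qb, if_pos (by omega)]
    norm_num
    rw [show tri 0 = 0 from by decide, pow_zero, one_mul]
  have h2 : cc q 1 2 = q := by
    rw [cc, show 2 * 1 = 2 from rfl, qb_self hq]
    norm_num
    rw [show tri 1 = 1 from by decide, pow_one]
  rw [VV, show 2 * 1 + 1 = 3 from rfl, Finset.sum_range_succ, Finset.sum_range_succ,
    Finset.sum_range_succ, Finset.sum_range_zero, h0, h1, h2]
  have f1 := fac_ne_zero hq 1
  have f2 := fac_ne_zero hq 2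
  rw [hfac2, hfac1]
  have hq1 := hq 1 one_ne_zero
  rw [pow_one] at hq1
  field_simp
  ring

include hq in
lemma WW_one : WW q 1 = -(fac q 1 * fac q 0) := by
  have hfac1 : fac q 1 = 1 - q := by
    rw [show (1:ℕ) = 0 + 1 from rfl, fac_succ, fac_zero, one_mul, pow_one]
  have hfac2 : fac q 2 = (1 - q) * (1 - q ^ 2) := by
    rw [show (2:ℕ) = 1 + 1 from rfl, fac_succ, hfac1]
  have h1 : cc q 1 1 = fac q 2 / (fac q 1 * fac q 1) := by
    rw [cc, qb, if_pos (by omega)]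
    norm_num
    rw [show tri 0 = 0 from by decide, pow_zero, one_mul]
  have h2 : cc q 1 2 = q := by
    rw [cc, show 2 * 1 = 2 from rfl, qb_self hq]
    norm_num
    rw [show tri 1 = 1 from by decide, pow_one]
  rw [WW, show 2 * 1 + 1 = 3 from rfl, Finset.sum_range_succ, Finset.sum_range_succ,
    Finset.sum_range_succ, Finset.sum_range_zero, h1, h2, fac_zero]
  have hq1 := hq 1 one_ne_zero
  rw [pow_one] at hq1
  rw [hfac2, hfac1]
  field_simp
  ring

include hq in
lemma VV_rec (n : ℕ) (hn : 1 ≤ n) :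
    VV q (n + 1) = (q ^ n + q ^ (n + 1) - 1 - q ^ (2 * n + 1)) * VV q n := by
  have h := sum_rec hq (fun i => (-1 : K) ^ i) n hn
  rw [VV, show 2 * (n+1) + 1 = 2 * (n+1) + 1 from rfl]
  rw [h]
  have e1 : ∑ i ∈ range (2 * n + 1), (-1 : K) ^ (i + 1) * cc q n i
      = -∑ i ∈ range (2 * n + 1), (-1 : K) ^ i * cc q n i := by
    rw [← Finset.sum_neg_distrib]
    exact Finset.sum_congr rfl (fun i _ => by rw [pow_succ]; ring)
  have e2 : ∑ i ∈ range (2 * n + 1), (-1 : K) ^ (i + 2) * cc q n i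
      = ∑ i ∈ range (2 * n + 1), (-1 : K) ^ i * cc q n i := by
    exact Finset.sum_congr rfl (fun i _ => by rw [pow_add]; ring)
  rw [e1, e2, VV]
  ring

include hq in
lemma WW_rec (n : ℕ) (hn : 1 ≤ n) :
    WW q (n + 1) = q ^ n * WW q n
      - (1 + q ^ (2 * n + 1)) * (WW q n + VV q n)
      + q ^ (n + 1) * (WW q n + 2 * VV q n) := by
  have h := sum_rec hq (fun i => (-1 : K) ^ i * (i : K)) n hn
  rw [WW, h]
  have e1 : ∑ i ∈ range (2 * n + 1), (-1 : K) ^ (i + 1) * ((i : K) + 1) * cc q n i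
      = -(WW q n + VV q n) := by
    rw [WW, VV, ← Finset.sum_add_distrib, ← Finset.sum_neg_distrib]
    exact Finset.sum_congr rfl (fun i _ => by rw [pow_succ]; ring)
  have e2 : ∑ i ∈ range (2 * n + 1), (-1 : K) ^ (i + 2) * ((i : K) + 2) * cc q n i
      = WW q n + 2 * VV q n := by
    rw [WW, VV, Finset.mul_sum, ← Finset.sum_add_distrib]
    exact Finset.sum_congr rfl (fun i _ => by rw [pow_add]; ring)
  have e1' : ∑ i ∈ range (2 * n + 1), (-1 : K) ^ (i + 1) * ((i + 1 : ℕ) : K) * cc q n i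
      = -(WW q n + VV q n) := by rw [← e1]; exact Finset.sum_congr rfl (fun i _ => by push_cast; ring)
  have e2' : ∑ i ∈ range (2 * n + 1), (-1 : K) ^ (i + 2) * ((i + 2 : ℕ) : K) * cc q n i
      = WW q n + 2 * VV q n := by rw [← e2]; exact Finset.sum_congr rfl (fun i _ => by push_cast; ring)
  rw [e1', e2', WW]
  ring

include hq in
lemma VV_eq_zero (n : ℕ) (hn : 1 ≤ n) : VV q n = 0 := by
  induction n with
  | zero => omega
  | succ k ih =>
    rcases Nat.lt_or_ge k 1 with hk | hk
    · have : k = 0 := by omega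
      subst this
      exact VV_one hq
    · rw [VV_rec hq k hk, ih hk, mul_zero]

include hq in
lemma WW_eq (n : ℕ) (hn : 1 ≤ n) : WW q n = (-1 : K) ^ n * fac q n * fac q (n - 1) := by
  induction n with
  | zero => omega
  | succ k ih =>
    rcases Nat.lt_or_ge k 1 with hk | hk
    · have : k = 0 := by omega
      subst this
      rw [WW_one hq]
      norm_num
    · rw [WW_rec hq k hk, VV_eq_zero hq k hk, ih hk]
      have hfs : fac q (k + 1) = fac q k * (1 - q ^ (k + 1)) := fac_succ k
      have hks : k + 1 - 1 = k := by omega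
      have hk1 : fac q k = fac q (k - 1) * (1 - q ^ k) := by
        obtain ⟨a, rfl⟩ : ∃ a, k = a + 1 := ⟨k - 1, by omega⟩
        rw [fac_succ]
        norm_num
      rw [hks, hfs, hk1]
      have hpow : q ^ k * q ^ (k + 1) = q ^ (2 * k + 1) := by
        rw [← pow_add]; congr 1; omega
      rw [pow_succ]
      linear_combination ((-1 : K) ^ k * fac q (k - 1) * fac q (k - 1) * (1 - q ^ k)) * hpow

def tn (j : ℕ) : ℕ := j * (j + 1) / 2

lemma two_tn (j : ℕ) : 2 * tn j = j * (j + 1) := by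
  rw [tn, Nat.mul_div_cancel' ]
  exact (Nat.even_mul_succ_self j).two_dvd

lemma tri_coe_nat (j : ℕ) : tri (j : ℤ) = tn j := by
  have h1 := two_tri (j : ℤ)
  have h2 := two_tn j
  have h3 : ((j * (j + 1) : ℕ) : ℤ) = (j : ℤ) * ((j : ℤ) + 1) := by push_cast; ring
  omega

lemma tri_neg_nat (j : ℕ) : tri (-((j : ℤ) + 1)) = tn j := by
  have h1 := two_tri (-((j : ℤ) + 1))
  have h3 : (-((j : ℤ) + 1)) * (-((j : ℤ) + 1) + 1) = (j : ℤ) * ((j : ℤ) + 1) := by ring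
  rw [h3] at h1
  have h2 := two_tn j
  have h4 : ((j * (j + 1) : ℕ) : ℤ) = (j : ℤ) * ((j : ℤ) + 1) := by push_cast; ring
  omega

def Rr (q : K) (n j : ℕ) : K :=
  (∏ k ∈ Finset.Ioc (n - j) n, (1 - q ^ k)) * ∏ k ∈ Finset.Ioc (n + j) (2 * n), (1 - q ^ k)

include hq in
lemma fac_mul_qb_plus (n j : ℕ) (hj : j ≤ n) :
    fac q n * qb q (2 * n) (n + j) = Rr q n j := by
  rw [qb, if_pos (by omega), Rr]
  have e1 : 2 * n - (n + j) = n - j := by omega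
  have h2 : fac q (2 * n) = fac q (n + j) * ∏ k ∈ Finset.Ioc (n + j) (2 * n), (1 - q ^ k) := by
    rw [fac, fac, Finset.prod_Ioc_consecutive _ (Nat.zero_le _) (by omega)]
  have h3 : fac q n = fac q (n - j) * ∏ k ∈ Finset.Ioc (n - j) n, (1 - q ^ k) := by
    rw [fac, fac, Finset.prod_Ioc_consecutive _ (Nat.zero_le _) (by omega)]
  rw [e1, h2]
  nth_rewrite 1 [h3]
  have n1 := fac_ne_zero hq (n + j)
  have n2 := fac_ne_zero hq (n - j)
  field_simp

include hq in
lemma fac_mul_qb_minus (n j : ℕ) (hj : j ≤ n) :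
    fac q n * qb q (2 * n) (n - j) = Rr q n j := by
  rw [qb, if_pos (by omega), Rr]
  have e1 : 2 * n - (n - j) = n + j := by omega
  have h2 : fac q (2 * n) = fac q (n + j) * ∏ k ∈ Finset.Ioc (n + j) (2 * n), (1 - q ^ k) := by
    rw [fac, fac, Finset.prod_Ioc_consecutive _ (Nat.zero_le _) (by omega)]
  have h3 : fac q n = fac q (n - j) * ∏ k ∈ Finset.Ioc (n - j) n, (1 - q ^ k) := by
    rw [fac, fac, Finset.prod_Ioc_consecutive _ (Nat.zero_le _) (by omega)]
  rw [e1, h2]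
  nth_rewrite 1 [h3]
  have n1 := fac_ne_zero hq (n + j)
  have n2 := fac_ne_zero hq (n - j)
  field_simp

include hq in
theorem mainK (n : ℕ) (hn : 1 ≤ n) :
    fac q n ^ 2 * fac q (n - 1)
      = ∑ j ∈ range (n + 1), (-1 : K) ^ j * ((n + j : ℕ) : K) * q ^ tn j * Rr q n j
        - ∑ j ∈ range n, (-1 : K) ^ j * ((n - 1 - j : ℕ) : K) * q ^ tn j * Rr q n (j + 1) := by
  have hsq : (-1 : K) ^ n * (-1 : K) ^ n = 1 := by
    rw [← pow_add]
    exact Even.neg_one_pow ⟨n, rfl⟩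
  have key : fac q n ^ 2 * fac q (n - 1) = (-1 : K) ^ n * fac q n * WW q n := by
    rw [WW_eq hq n hn]
    linear_combination (-(fac q n * fac q n * fac q (n - 1))) * hsq
  rw [key, WW]
  have hsplit : (∑ i ∈ range (2 * n + 1), (-1 : K) ^ i * (i : K) * cc q n i)
      = (∑ j ∈ range n, (-1 : K) ^ (n - 1 - j) * ((n - 1 - j : ℕ) : K) * cc q n (n - 1 - j))
        + ∑ j ∈ range (n + 1), (-1 : K) ^ (n + j) * ((n + j : ℕ) : K) * cc q n (n + j) := by
    rw [Finset.sum_range_reflect (fun i => (-1 : K) ^ i * (i : K) * cc q n i) n]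
    rw [Finset.range_eq_Ico, ← Finset.sum_Ico_consecutive _ (Nat.zero_le n)
      (show n ≤ 2 * n + 1 by omega)]
    congr 1
    · rw [Finset.sum_Ico_eq_sum_range]; simp
    rw [Finset.sum_Ico_eq_sum_range, show 2 * n + 1 - n = n + 1 from by omega,
      Finset.range_eq_Ico]
  rw [hsplit, mul_add, Finset.mul_sum, Finset.mul_sum]
  have hplus : ∀ j ∈ range (n + 1),
      (-1 : K) ^ n * fac q n * ((-1 : K) ^ (n + j) * ((n + j : ℕ) : K) * cc q n (n + j))
        = (-1 : K) ^ j * ((n + j : ℕ) : K) * q ^ tn j * Rr q n j := by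
    intro j hj
    have hjn : j ≤ n := by simpa using Nat.lt_succ_iff.mp (Finset.mem_range.mp hj)
    have hcc : cc q n (n + j) = q ^ tn j * qb q (2 * n) (n + j) := by
      rw [cc]
      congr 2
      rw [show ((n + j : ℕ) : ℤ) - (n : ℤ) = (j : ℤ) from by push_cast; ring, tri_coe_nat]
    rw [hcc]
    have hs : (-1 : K) ^ n * (-1 : K) ^ (n + j) = (-1 : K) ^ j := by
      rw [← pow_add, show n + (n + j) = 2 * n + j from by ring, pow_add, pow_mul]
      norm_num
    have hfq := fac_mul_qb_plus hq n j hjn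
    linear_combination ((-1 : K) ^ n * (-1 : K) ^ (n + j) * ((n + j : ℕ) : K) * q ^ tn j) * hfq
      + (((n + j : ℕ) : K) * q ^ tn j * Rr q n j) * hs
  have hminus : ∀ j ∈ range n,
      (-1 : K) ^ n * fac q n
          * ((-1 : K) ^ (n - 1 - j) * ((n - 1 - j : ℕ) : K) * cc q n (n - 1 - j))
        = -((-1 : K) ^ j * ((n - 1 - j : ℕ) : K) * q ^ tn j * Rr q n (j + 1)) := by
    intro j hj
    have hjn : j < n := Finset.mem_range.mp hj
    have hcc : cc q n (n - 1 - j) = q ^ tn j * qb q (2 * n) (n - 1 - j) := by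
      rw [cc]
      congr 2
      rw [show ((n - 1 - j : ℕ) : ℤ) - (n : ℤ) = -((j : ℤ) + 1) from by omega, tri_neg_nat]
    rw [hcc]
    have hs : (-1 : K) ^ n * (-1 : K) ^ (n - 1 - j) = -(-1 : K) ^ j := by
      obtain ⟨t, ht⟩ : ∃ t, n + (n - 1 - j) = 2 * t + (j + 1) := ⟨n - 1 - j, by omega⟩
      rw [← pow_add, ht, pow_add, pow_mul]
      norm_num
      rw [pow_succ]
      ring
    have hfq : fac q n * qb q (2 * n) (n - 1 - j) = Rr q n (j + 1) := by
      rw [show n - 1 - j = n - (j + 1) from by omega]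
      exact fac_mul_qb_minus hq n (j + 1) (by omega)
    linear_combination ((-1 : K) ^ n * (-1 : K) ^ (n - 1 - j) * ((n - 1 - j : ℕ) : K) * q ^ tn j) * hfq
      + (((n - 1 - j : ℕ) : K) * q ^ tn j * Rr q n (j + 1)) * hs
  rw [Finset.sum_congr rfl hminus, Finset.sum_congr rfl hplus, Finset.sum_neg_distrib]
  ring

end JacobiAux

namespace JacobiZ
open JacobiAux PowerSeries

noncomputable abbrev K' : Type := FractionRing (PowerSeries ℤ)

local notation "φ" => algebraMap (PowerSeries ℤ) K'

noncomputable def qq : K' := φ PowerSeries.X ^ 9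

lemma hq' : ∀ k : ℕ, k ≠ 0 → (1 : K') - qq ^ k ≠ 0 := by
  intro k hk h
  have h2 : φ (1 - PowerSeries.X ^ (9 * k)) = 0 := by
    rw [map_sub, map_one, map_pow, pow_mul]
    exact h
  have h3 : (1 : PowerSeries ℤ) - PowerSeries.X ^ (9 * k) = 0 := by
    apply IsFractionRing.injective (PowerSeries ℤ) K'
    rw [h2, map_zero]
  have h4 := congrArg (PowerSeries.constantCoeff (R := ℤ)) h3
  simp [zero_pow (by omega : 9 * k ≠ 0)] at h4

noncomputable def Fz (n : ℕ) : PowerSeries ℤ :=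
  ∏ k ∈ Finset.Ioc 0 n, (1 - PowerSeries.X ^ (9 * k))

noncomputable def Rz (n j : ℕ) : PowerSeries ℤ :=
  (∏ k ∈ Finset.Ioc (n - j) n, (1 - PowerSeries.X ^ (9 * k)))
    * ∏ k ∈ Finset.Ioc (n + j) (2 * n), (1 - PowerSeries.X ^ (9 * k))

lemma phi_one_sub (k : ℕ) : φ (1 - PowerSeries.X ^ (9 * k)) = 1 - qq ^ k := by
  rw [map_sub, map_one, map_pow, pow_mul, qq]

lemma phi_Fz (n : ℕ) : φ (Fz n) = fac qq n := by
  rw [Fz, fac, map_prod]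
  exact Finset.prod_congr rfl (fun k _ => phi_one_sub k)

lemma phi_Rz (n j : ℕ) : φ (Rz n j) = Rr qq n j := by
  rw [Rz, Rr, map_mul, map_prod, map_prod]
  congr 1
  · exact Finset.prod_congr rfl (fun k _ => phi_one_sub k)
  · exact Finset.prod_congr rfl (fun k _ => phi_one_sub k)

lemma phi_C (c : ℤ) : φ (PowerSeries.C (R := ℤ) c) = (c : K') := by
  have : (algebraMap (PowerSeries ℤ) K').comp (PowerSeries.C (R := ℤ)) = Int.castRingHom K' := by
    apply RingHom.ext_int
  have h2 := congrArg (fun (g : ℤ →+* K') => g c) this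
  simpa using h2

lemma phi_Xpow (e : ℕ) : φ (PowerSeries.X ^ (9 * e)) = qq ^ e := by
  rw [map_pow, pow_mul, qq]

theorem mainZ (n : ℕ) (hn : 1 ≤ n) :
    Fz n ^ 2 * Fz (n - 1)
      = ∑ j ∈ Finset.range (n + 1),
          PowerSeries.C (R := ℤ) ((-1) ^ j * (n + j : ℕ)) * PowerSeries.X ^ (9 * tn j) * Rz n j
        - ∑ j ∈ Finset.range n,
          PowerSeries.C (R := ℤ) ((-1) ^ j * (n - 1 - j : ℕ)) * PowerSeries.X ^ (9 * tn j)
            * Rz n (j + 1) := by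
  apply IsFractionRing.injective (PowerSeries ℤ) K'
  rw [map_sub, map_sum, map_sum, map_mul, map_pow, phi_Fz, phi_Fz]
  show fac qq n ^ 2 * fac qq (n - 1) = _
  rw [mainK hq' n hn]
  congr 1
  · refine Finset.sum_congr rfl (fun j _ => ?_)
    rw [map_mul, map_mul, phi_C, phi_Xpow, phi_Rz]
    push_cast
    ring
  · refine Finset.sum_congr rfl (fun j _ => ?_)
    rw [map_mul, map_mul, phi_C, phi_Xpow, phi_Rz]
    push_cast
    ring

lemma tn_ge (j : ℕ) : j ≤ tn j := by
  rcases Nat.eq_zero_or_pos j with rfl | hj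
  · simp [tn]
  · have h1 := two_tn j
    have h2 : j * (j + 1) = j * j + j := by ring
    have h3 : j ≤ j * j := Nat.le_mul_of_pos_left j hj
    omega

lemma prod_sub_one_dvd (s : Finset ℕ) (a : ℕ) (h : ∀ k ∈ s, a ≤ k) :
    (PowerSeries.X : PowerSeries ℤ) ^ (9 * a)
      ∣ (∏ k ∈ s, (1 - PowerSeries.X ^ (9 * k))) - 1 := by
  classical
  induction s using Finset.induction_on with
  | empty => simp
  | @insert x t hx ih =>
    rw [Finset.prod_insert hx]
    have hxa : a ≤ x := h x (Finset.mem_insert_self x t)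
    have iht := ih (fun k hk => h k (Finset.mem_insert_of_mem hk))
    have key : ((1 : PowerSeries ℤ) - PowerSeries.X ^ (9 * x))
          * (∏ k ∈ t, ((1 : PowerSeries ℤ) - PowerSeries.X ^ (9 * k))) - 1
        = ((∏ k ∈ t, ((1 : PowerSeries ℤ) - PowerSeries.X ^ (9 * k))) - 1)
          - PowerSeries.X ^ (9 * x)
            * ∏ k ∈ t, ((1 : PowerSeries ℤ) - PowerSeries.X ^ (9 * k)) := by ring
    rw [key]
    exact dvd_sub iht (Dvd.dvd.mul_right (pow_dvd_pow _ (by omega)) _)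

lemma Rz_sub_one_dvd (n j : ℕ) (hj : j ≤ n) :
    (PowerSeries.X : PowerSeries ℤ) ^ (9 * (n - j + 1)) ∣ Rz n j - 1 := by
  rw [Rz]
  set A := ∏ k ∈ Finset.Ioc (n - j) n, (1 - (PowerSeries.X : PowerSeries ℤ) ^ (9 * k)) with hA
  set B := ∏ k ∈ Finset.Ioc (n + j) (2 * n), (1 - (PowerSeries.X : PowerSeries ℤ) ^ (9 * k)) with hB
  have hAd : (PowerSeries.X : PowerSeries ℤ) ^ (9 * (n - j + 1)) ∣ A - 1 := by
    apply prod_sub_one_dvd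
    intro k hk
    have := (Finset.mem_Ioc.mp hk).1
    omega
  have hBd : (PowerSeries.X : PowerSeries ℤ) ^ (9 * (n - j + 1)) ∣ B - 1 := by
    apply prod_sub_one_dvd
    intro k hk
    have := (Finset.mem_Ioc.mp hk).1
    omega
  have key : A * B - 1 = (A - 1) * B + (B - 1) := by ring
  rw [key]
  exact dvd_add (hAd.mul_right B) hBd

lemma coeff_term (e d m : ℕ) (R : PowerSeries ℤ)
    (hdvd : (PowerSeries.X : PowerSeries ℤ) ^ (9 * d) ∣ R - 1) (hlt : m < e + 9 * d) :
    PowerSeries.coeff (R := ℤ) m (PowerSeries.X ^ e * R) = if m = e then 1 else 0 := by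
  have hsplit : (PowerSeries.X : PowerSeries ℤ) ^ e * R
      = PowerSeries.X ^ e + PowerSeries.X ^ e * (R - 1) := by ring
  rw [hsplit, map_add, PowerSeries.coeff_X_pow]
  have hz : PowerSeries.coeff (R := ℤ) m (PowerSeries.X ^ e * (R - 1)) = 0 := by
    have hd2 : (PowerSeries.X : PowerSeries ℤ) ^ (e + 9 * d)
        ∣ PowerSeries.X ^ e * (R - 1) := by
      rw [pow_add]
      exact mul_dvd_mul_left _ hdvd
    exact PowerSeries.X_pow_dvd_iff.mp hd2 m hlt
  rw [hz, add_zero]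

end JacobiZ


/-- Jacobi's identity rescaled: in `ℤ⟦q⟧`,
`q·∏_{k≥1}(1-q^{9k})^3 = ∑_{j≥0} (-1)^j (2j+1) q^{(9j^2+9j)/2+1}`,
stated coefficientwise; factors with `k > m` do not affect the coefficient of `q^m`. -/
theorem jacobi_rescaled (m : ℕ) :
    PowerSeries.coeff (R := ℤ) m
        (PowerSeries.X * ∏ k ∈ Finset.Icc 1 m, (1 - PowerSeries.X ^ (9 * k)) ^ 3) =
      ∑ j ∈ Finset.range (m + 1),
        if m = (9 * j ^ 2 + 9 * j) / 2 + 1 then (-1 : ℤ) ^ j * (2 * j + 1) else 0 := by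
  classical
  rcases Nat.eq_zero_or_pos m with rfl | hm
  · simp [PowerSeries.coeff_zero_eq_constantCoeff]
  obtain ⟨n, rfl⟩ : ∃ n, m = n + 1 := ⟨m - 1, by omega⟩
  rw [PowerSeries.coeff_succ_X_mul]
  have hP : (∏ k ∈ Finset.Icc 1 (n + 1), ((1 : PowerSeries ℤ) - PowerSeries.X ^ (9 * k)) ^ 3)
      = JacobiZ.Fz (n + 1) ^ 3 := by
    rw [JacobiZ.Fz, ← Finset.prod_pow]
    congr 1
  rw [hP]
  have hFsplit : JacobiZ.Fz (n + 1) = JacobiZ.Fz n * (1 - PowerSeries.X ^ (9 * (n + 1))) := by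
    rw [JacobiZ.Fz, JacobiZ.Fz, Finset.prod_Ioc_succ_top (Nat.zero_le _)]
  have hcube : JacobiZ.Fz (n + 1) ^ 3
      = JacobiZ.Fz (n + 1) ^ 2 * JacobiZ.Fz n
        - JacobiZ.Fz (n + 1) ^ 2 * JacobiZ.Fz n * PowerSeries.X ^ (9 * (n + 1)) := by
    have h3 : JacobiZ.Fz (n + 1) ^ 3 = JacobiZ.Fz (n + 1) ^ 2 * JacobiZ.Fz (n + 1) := by ring
    rw [h3]
    nth_rewrite 2 [hFsplit]
    ring
  rw [hcube, map_sub]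
  have hz : PowerSeries.coeff (R := ℤ) n
      (JacobiZ.Fz (n + 1) ^ 2 * JacobiZ.Fz n * PowerSeries.X ^ (9 * (n + 1))) = 0 := by
    refine PowerSeries.X_pow_dvd_iff.mp (dvd_mul_left _ _) n (by omega)
  rw [hz, sub_zero]
  have hmz := JacobiZ.mainZ (n + 1) (by omega)
  rw [show n + 1 - 1 = n from rfl] at hmz
  rw [hmz, map_sub, map_sum, map_sum]
  have hterm1 : ∀ j ∈ Finset.range (n + 2),
      PowerSeries.coeff (R := ℤ) n (PowerSeries.C (R := ℤ) ((-1) ^ j * ((n + 1 + j : ℕ) : ℤ))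
          * PowerSeries.X ^ (9 * JacobiAux.tn j) * JacobiZ.Rz (n + 1) j)
        = (-1) ^ j * ((n + 1 + j : ℕ) : ℤ)
            * (if n = 9 * JacobiAux.tn j then 1 else 0) := by
    intro j hj
    have hj2 : j ≤ n + 1 := by have := Finset.mem_range.mp hj; omega
    rw [mul_assoc, PowerSeries.coeff_C_mul]
    congr 1
    refine JacobiZ.coeff_term _ (n + 1 - j + 1) _ _
      (JacobiZ.Rz_sub_one_dvd (n + 1) j hj2) ?_
    have := JacobiZ.tn_ge j
    omega
  have hterm2 : ∀ j ∈ Finset.range (n + 1),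
      PowerSeries.coeff (R := ℤ) n (PowerSeries.C (R := ℤ) ((-1) ^ j * ((n - j : ℕ) : ℤ))
          * PowerSeries.X ^ (9 * JacobiAux.tn j) * JacobiZ.Rz (n + 1) (j + 1))
        = (-1) ^ j * ((n - j : ℕ) : ℤ)
            * (if n = 9 * JacobiAux.tn j then 1 else 0) := by
    intro j hj
    have hj2 : j + 1 ≤ n + 1 := by have := Finset.mem_range.mp hj; omega
    rw [mul_assoc, PowerSeries.coeff_C_mul]
    congr 1
    refine JacobiZ.coeff_term _ (n + 1 - (j + 1) + 1) _ _
      (JacobiZ.Rz_sub_one_dvd (n + 1) (j + 1) hj2) ?_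
    have := JacobiZ.tn_ge j
    omega
  rw [Finset.sum_congr rfl hterm1, Finset.sum_congr rfl hterm2]
  have hBtop : (-1 : ℤ) ^ (n + 1) * ((n - (n + 1) : ℕ) : ℤ)
      * (if n = 9 * JacobiAux.tn (n + 1) then 1 else 0) = 0 := by
    rw [show n - (n + 1) = 0 from by omega]
    norm_num
  have hext : (∑ j ∈ Finset.range (n + 1), (-1 : ℤ) ^ j * ((n - j : ℕ) : ℤ)
        * (if n = 9 * JacobiAux.tn j then 1 else 0))
      = ∑ j ∈ Finset.range (n + 2), (-1 : ℤ) ^ j * ((n - j : ℕ) : ℤ)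
        * (if n = 9 * JacobiAux.tn j then 1 else 0) := by
    symm
    rw [Finset.sum_range_succ, hBtop, add_zero]
  rw [hext, ← Finset.sum_sub_distrib]
  refine Finset.sum_congr rfl (fun j hj => ?_)
  have hcond : (n + 1 = (9 * j ^ 2 + 9 * j) / 2 + 1) ↔ (n = 9 * JacobiAux.tn j) := by
    have h1 := JacobiAux.two_tn j
    have h2 : j * (j + 1) = j ^ 2 + j := by ring
    omega
  by_cases hc : n = 9 * JacobiAux.tn j
  · rw [if_pos hc, if_pos (hcond.mpr hc)]
    have htg := JacobiZ.tn_ge j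
    have hjle : j ≤ n := by omega
    have hcast : ((n - j : ℕ) : ℤ) = (n : ℤ) - j := by omega
    rw [hcast]
    push_cast
    ring
  · rw [if_neg hc, if_neg (fun hcc => hc (hcond.mp hcc))]
    simp
end

section
/- Define cφ3'(n) by ∑_{n≥0} cφ3'(n) q^n = 9 q ∏_{n≥1} (1-q^{9n})^3 / ((1-q^{3n})(1-q^n)^3). Assuming a(15n+6) ≡ 0 (mod 5) and a(15n+12) ≡ 0 (mod 5) for all n ≥ 0 (where ∑ a(n) q^n = ∏_{n≥1}(1-q^{3n})^{-1}(1-q^n)^{-3}), one has cφ3'(45n+7) ≡ 0 (mod 5) for all n ≥ 0. -/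
open PowerSeries Finset

namespace Cphi

variable {R : Type*} [CommRing R]

/-- Coefficients agree up to index `N`. -/
def EqUpTo (N : ℕ) (f g : R⟦X⟧) : Prop := ∀ m ≤ N, coeff (R := R) m f = coeff (R := R) m g

theorem EqUpTo.refl {N : ℕ} {f : R⟦X⟧} : EqUpTo N f f := fun _ _ => Eq.refl _

theorem EqUpTo.symm {N : ℕ} {f g : R⟦X⟧} (h : EqUpTo N f g) : EqUpTo N g f :=
  fun m hm => (h m hm).symm

theorem EqUpTo.trans {N : ℕ} {f g h : R⟦X⟧} (h1 : EqUpTo N f g) (h2 : EqUpTo N g h) :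
    EqUpTo N f h := fun m hm => (h1 m hm).trans (h2 m hm)

theorem EqUpTo.of_eq {N : ℕ} {f g : R⟦X⟧} (h : f = g) : EqUpTo N f g := fun _ _ => by rw [h]

theorem EqUpTo.mul {N : ℕ} {f f' g g' : R⟦X⟧} (hf : EqUpTo N f f') (hg : EqUpTo N g g') :
    EqUpTo N (f * g) (f' * g') := by
  intro m hm
  rw [coeff_mul, coeff_mul]
  refine Finset.sum_congr rfl fun p hp => ?_
  rw [Finset.HasAntidiagonal.mem_antidiagonal] at hp
  rw [hf p.1 (by omega), hg p.2 (by omega)]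

theorem EqUpTo.add {N : ℕ} {f f' g g' : R⟦X⟧} (hf : EqUpTo N f f') (hg : EqUpTo N g g') :
    EqUpTo N (f + g) (f' + g') := by
  intro m hm
  simp only [map_add, hf m hm, hg m hm]

theorem EqUpTo.sum {N : ℕ} {ι : Type*} {s : Finset ι} {f g : ι → R⟦X⟧}
    (h : ∀ i ∈ s, EqUpTo N (f i) (g i)) :
    EqUpTo N (∑ i ∈ s, f i) (∑ i ∈ s, g i) := by
  intro m hm
  rw [map_sum, map_sum]
  exact Finset.sum_congr rfl fun i hi => h i hi m hm

theorem eqUpTo_one_of_prod {N : ℕ} {ι : Type*} {s : Finset ι} {f : ι → R⟦X⟧}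
    (h : ∀ i ∈ s, EqUpTo N (f i) 1) : EqUpTo N (∏ i ∈ s, f i) 1 := by
  classical
  induction s using Finset.cons_induction with
  | empty => exact EqUpTo.of_eq (Finset.prod_empty)
  | cons a s ha ih =>
    rw [Finset.prod_cons]
    have := (h a (Finset.mem_cons_self a s)).mul (ih fun i hi => h i (Finset.mem_cons.mpr (Or.inr hi)))
    rwa [one_mul] at this

theorem X_pow_eqUpTo_zero {N e : ℕ} (he : N < e) : EqUpTo N (X ^ e : R⟦X⟧) 0 := by
  intro m hm
  rw [coeff_X_pow, map_zero, if_neg (by omega)]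

theorem one_sub_X_pow_eqUpTo_one {N e : ℕ} (he : N < e) : EqUpTo N (1 - X ^ e : R⟦X⟧) 1 := by
  intro m hm
  rw [map_sub, X_pow_eqUpTo_zero he m hm, map_zero, sub_zero]

theorem coeff_zero_of_mul {N : ℕ} {u w : R⟦X⟧} (hu : constantCoeff (R := R) u = 1)
    (h : ∀ m ≤ N, coeff (R := R) m (u * w) = 0) : ∀ m ≤ N, coeff (R := R) m w = 0 := by
  intro m
  induction m using Nat.strong_induction_on with
  | _ m ih =>
    intro hm
    have hc := h m hm
    rw [coeff_mul] at hc
    rw [Finset.sum_eq_single ((0 : ℕ), m)] at hc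
    · rw [coeff_zero_eq_constantCoeff, hu, one_mul] at hc
      exact hc
    · rintro ⟨p1, p2⟩ hp hne
      rw [Finset.HasAntidiagonal.mem_antidiagonal] at hp
      have hp2 : p2 < m := by
        rcases Nat.eq_zero_or_pos p1 with h0 | h0
        · exact absurd (by simp only [h0] at hp ⊢; simp [← hp]) hne
        · omega
      rw [ih p2 hp2 (by omega), mul_zero]
    · intro habs
      exact absurd (by simp) habs

theorem EqUpTo.cancel {N : ℕ} {u v w : R⟦X⟧} (hu : constantCoeff (R := R) u = 1)
    (h : EqUpTo N (u * v) (u * w)) : EqUpTo N v w := by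
  intro m hm
  have := coeff_zero_of_mul hu (w := v - w) (fun m hm => by
    rw [mul_sub, map_sub, sub_eq_zero]; exact h m hm) m hm
  rw [map_sub, sub_eq_zero] at this
  exact this

theorem invOfUnit_eqUpTo {N : ℕ} {P Q : R⟦X⟧} (hP : constantCoeff (R := R) P = 1)
    (hQ : constantCoeff (R := R) Q = 1) (h : EqUpTo N P Q) :
    EqUpTo N (invOfUnit P 1) (invOfUnit Q 1) := by
  refine EqUpTo.cancel (u := P) hP ?_
  have h1 : P * invOfUnit P 1 = 1 := mul_invOfUnit P 1 (by simpa using hP)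
  have h2 : Q * invOfUnit Q 1 = 1 := mul_invOfUnit Q 1 (by simpa using hQ)
  exact (EqUpTo.of_eq (h1.trans h2.symm)).trans (h.symm.mul EqUpTo.refl)

theorem prod_Icc_tail_eqUpTo {N L₁ L₂ : ℕ} (hL : L₁ ≤ L₂) {f : ℕ → R⟦X⟧}
    (h : ∀ k ∈ Ioc L₁ L₂, EqUpTo N (f k) 1) :
    EqUpTo N (∏ k ∈ Icc 1 L₂, f k) (∏ k ∈ Icc 1 L₁, f k) := by
  have hsplit : Icc 1 L₂ = Icc 1 L₁ ∪ Ioc L₁ L₂ := by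
    ext x; simp only [Finset.mem_Icc, Finset.mem_union, Finset.mem_Ioc]; omega
  have hdisj : Disjoint (Icc 1 L₁) (Ioc L₁ L₂) := by
    rw [Finset.disjoint_left]
    intro x hx hx'
    simp only [Finset.mem_Icc] at hx
    simp only [Finset.mem_Ioc] at hx'
    omega
  rw [hsplit, Finset.prod_union hdisj]
  have := (EqUpTo.refl (N := N) (f := ∏ k ∈ Icc 1 L₁, f k)).mul (eqUpTo_one_of_prod h)
  rwa [mul_one] at this

/-- Triangular number of an integer: `j*(j+1)/2 ≥ 0`. -/
def tri (j : ℤ) : ℕ := (j * (j + 1)).toNat / 2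

theorem tri_cast (j : ℤ) : (tri j : ℤ) * 2 = j * (j + 1) := by
  have h2 : (2:ℤ) ∣ j * (j + 1) := (Int.even_mul_succ_self j).two_dvd
  have h0 : 0 ≤ j * (j + 1) := by rcases le_or_gt 0 j with h | h <;> nlinarith
  unfold tri
  omega

theorem tri_succ (j : ℤ) : (tri (j+1) : ℤ) = tri j + (j + 1) := by
  have h1 := tri_cast j
  have h2 := tri_cast (j+1)
  nlinarith [h1, h2]

theorem tri_neg (j : ℤ) : tri (-j - 1) = tri j := by
  have h1 := tri_cast j
  have h2 := tri_cast (-j - 1)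
  have : (tri (-j-1) : ℤ) = (tri j : ℤ) := by nlinarith
  exact_mod_cast this

theorem tri_zero : tri 0 = 0 := rfl

theorem tri_nat (n : ℕ) : (tri n : ℤ) * 2 = n * (n + 1) := tri_cast n

theorem tri_nat_le (n : ℕ) : n ≤ tri n := by
  have := tri_cast (n : ℤ)
  have h : ((n : ℤ)) * (n + 1) = n * n + n := by ring
  nlinarith [this, h, sq_nonneg ((n:ℤ) - 1)]

/-- Gaussian binomial coefficients as power series (in `X^d`). -/
noncomputable def gb (R : Type*) [CommRing R] (d : ℕ) : ℕ → ℕ → R⟦X⟧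
  | 0, 0 => 1
  | 0, _ + 1 => 0
  | _ + 1, 0 => 1
  | n + 1, k + 1 => gb R d n k + X ^ (d * (k + 1)) * gb R d n (k + 1)

theorem gb_succ_succ (d n k : ℕ) :
    gb R d (n+1) (k+1) = gb R d n k + X ^ (d * (k + 1)) * gb R d n (k + 1) := by
  simp [gb]

theorem gb_zero_right (d n : ℕ) : gb R d n 0 = 1 := by cases n <;> simp [gb]

theorem gb_eq_zero (d : ℕ) : ∀ {n k : ℕ}, n < k → gb R d n k = 0 := by
  intro n
  induction n with
  | zero => intro k hk; match k, hk with | k+1, _ => simp [gb]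
  | succ n ih =>
    intro k hk
    match k, hk with
    | k+1, hk =>
      rw [gb_succ_succ, ih (by omega), ih (by omega), mul_zero, add_zero]

theorem gb_self (d : ℕ) : ∀ n : ℕ, gb R d n n = 1 := by
  intro n
  induction n with
  | zero => simp [gb]
  | succ n ih => rw [gb_succ_succ, ih, gb_eq_zero d (by omega), mul_zero, add_zero]

theorem gb_one_right (d : ℕ) : ∀ n : ℕ, gb R d n 1 = ∑ i ∈ range n, X ^ (d * i) := by
  intro n
  induction n with
  | zero => simp [gb]
  | succ n ih =>
    rw [gb_succ_succ, gb_zero_right, ih, Finset.mul_sum]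
    have h1 : ∀ i ∈ range n, (X:R⟦X⟧)^(d*1) * X^(d*i) = X^(d*(i+1)) := by
      intro i _; rw [← pow_add]; congr 1; ring
    rw [Finset.sum_congr rfl h1]
    rw [Finset.sum_range_succ' (fun i => (X:R⟦X⟧)^(d*i)) n]
    simp [add_comm]

/-- Second Pascal rule for Gaussian binomials. -/
theorem gb_B (d : ℕ) : ∀ n k : ℕ, gb R d (n+1) (k+1) = X ^ (d * (n - k)) * gb R d n k + gb R d n (k+1) := by
  intro n
  induction n with
  | zero =>
    intro k
    match k with
    | 0 => simp [gb]
    | s+1 => simp [gb, gb_eq_zero d (by omega : (0:ℕ) < s+1), gb_eq_zero d (by omega : (0:ℕ) < s+2)]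
  | succ n ih =>
    intro k
    match k with
    | 0 =>
      rw [gb_zero_right, mul_one, gb_one_right, gb_one_right, Nat.sub_zero,
        Finset.sum_range_succ]
      ring
    | s+1 =>
      rcases le_or_gt n s with hns | hsn
      · -- degenerate case
        have hz2 : gb R d (n+1) (s+2) = 0 := gb_eq_zero d (by omega)
        rw [gb_succ_succ, hz2, mul_zero, add_zero]
        have he : n + 1 - (s + 1) = 0 := by omega
        rw [he, mul_zero, pow_zero, one_mul, add_zero]
      · -- main case s < n
        have A1 : gb R d (n+1) (s+1) = gb R d n s + X ^ (d*(s+1)) * gb R d n (s+1) := gb_succ_succ d n s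
        have A2 : gb R d (n+1) (s+2) = gb R d n (s+1) + X ^ (d*(s+2)) * gb R d n (s+2) := gb_succ_succ d n (s+1)
        have B1 : gb R d (n+1) (s+1) = X ^ (d*(n-s)) * gb R d n s + gb R d n (s+1) := ih s
        have B2 : gb R d (n+1) (s+2) = X ^ (d*(n-s-1)) * gb R d n (s+1) + gb R d n (s+2) := ih (s+1)
        have hgoal : gb R d (n+2) (s+2) = gb R d (n+1) (s+1) + X ^ (d*(s+2)) * gb R d (n+1) (s+2) := gb_succ_succ d (n+1) (s+1)
        have he : n + 1 - (s + 1) = n - s := by omega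
        rw [hgoal, he]
        conv_lhs => rw [B1, B2]
        conv_rhs => rw [A1, A2]
        have hexp : (X:R⟦X⟧) ^ (d*(s+2)) * X ^ (d*(n-s-1)) = X ^ (d*(n-s)) * X ^ (d*(s+1)) := by
          rw [← pow_add, ← pow_add]
          congr 1
          set u := n - s - 1 with hu
          rw [show n - s = u + 1 by omega]
          ring
        linear_combination (gb R d n (s+1)) * hexp

/-- Truncated Euler product `∏_{k=1}^{L} (1 - X^(d k))`. -/
noncomputable def E (R : Type*) [CommRing R] (d L : ℕ) : R⟦X⟧ := ∏ k ∈ Icc 1 L, (1 - X ^ (d * k))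

theorem E_zero (d : ℕ) : E R d 0 = 1 := by simp [E]

theorem E_succ (d L : ℕ) : E R d (L+1) = E R d L * (1 - X ^ (d * (L+1))) := by
  rw [E, E, ← Finset.prod_Icc_succ_top (by omega : 1 ≤ L + 1)]

theorem constantCoeff_E (d L : ℕ) (hd : 1 ≤ d) : constantCoeff (R := R) (E R d L) = 1 := by
  rw [E, map_prod]
  refine Finset.prod_eq_one fun k hk => ?_
  rw [Finset.mem_Icc] at hk
  rw [map_sub, map_one, map_pow, constantCoeff_X, zero_pow (Nat.mul_pos hd hk.1).ne', sub_zero]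

theorem gb_mul_E (d : ℕ) : ∀ n k : ℕ, k ≤ n → gb R d n k * (E R d k * E R d (n - k)) = E R d n := by
  intro n
  induction n with
  | zero => intro k hk; interval_cases k; simp [gb, E_zero]
  | succ n ih =>
    intro k hk
    match k with
    | 0 => rw [gb_zero_right, E_zero, one_mul, one_mul, Nat.sub_zero]
    | s+1 =>
      rcases eq_or_lt_of_le hk with heq | hlt
      · rw [heq.symm] at *
        rw [gb_self, Nat.sub_self, E_zero, one_mul, mul_one]
      · have hsn : s < n := by omega
        have ih1 : gb R d n s * (E R d s * E R d (n - s)) = E R d n := ih s (by omega)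
        have ih2 : gb R d n (s+1) * (E R d (s+1) * E R d (n - s - 1)) = E R d n := by
          have := ih (s+1) (by omega)
          rwa [show n - (s+1) = n - s - 1 by omega] at this
        have hE1 : E R d (s+1) = E R d s * (1 - X ^ (d*(s+1))) := E_succ d s
        have hE2 : E R d (n - s) = E R d (n - s - 1) * (1 - X ^ (d*(n-s))) := by
          have := E_succ (R := R) d (n - s - 1)
          rwa [show n - s - 1 + 1 = n - s by omega] at this
        have hEtop : E R d (n+1) = E R d n * (1 - X ^ (d*(n+1))) := E_succ d n
        have hsub : n + 1 - (s + 1) = n - s := by omega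
        rw [hsub, gb_succ_succ, hEtop, hE1, hE2]
        rw [hE2] at ih1
        rw [hE1] at ih2
        have hexp : (X:R⟦X⟧) ^ (d*(s+1)) * X ^ (d*(n-s)) = X ^ (d*(n+1)) := by
          rw [← pow_add, ← Nat.left_distrib, show s + 1 + (n - s) = n + 1 by omega]
        linear_combination (1 - X^(d*(s+1)) : R⟦X⟧) * ih1 + (X^(d*(s+1)) * (1 - X^(d*(n-s))) : R⟦X⟧) * ih2 - (E R d n) * hexp

theorem E_tail (d : ℕ) (hd : 1 ≤ d) {N L : ℕ} (hL : N ≤ L) :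
    EqUpTo N (E R d L) (E R d N) := by
  apply prod_Icc_tail_eqUpTo hL
  intro k hk
  rw [Finset.mem_Ioc] at hk
  refine one_sub_X_pow_eqUpTo_one (lt_of_lt_of_le hk.1 ?_)
  calc k = 1 * k := (one_mul k).symm
    _ ≤ d * k := Nat.mul_le_mul_right k hd

theorem gb_E_eqUpTo (d : ℕ) (hd : 1 ≤ d) {N m i : ℕ} (h1 : N ≤ i) (h2 : N + i ≤ 2*m) :
    EqUpTo N (gb R d (2*m) i * E R d N) 1 := by
  have hk : i ≤ 2*m := by omega
  have key := gb_mul_E (R := R) d (2*m) i hk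
  have e1 : EqUpTo N (E R d i) (E R d N) := E_tail d hd h1
  have e2 : EqUpTo N (E R d (2*m - i)) (E R d N) := E_tail d hd (by omega)
  have e3 : EqUpTo N (E R d (2*m)) (E R d N) := E_tail d hd (by omega)
  have c1 : EqUpTo N (gb R d (2*m) i * (E R d N * E R d N))
      (gb R d (2*m) i * (E R d i * E R d (2*m - i))) :=
    EqUpTo.refl.mul (e1.symm.mul e2.symm)
  have c2 : EqUpTo N (gb R d (2*m) i * (E R d N * E R d N)) (E R d N) :=
    c1.trans ((EqUpTo.of_eq key).trans e3)
  have big : EqUpTo N (E R d N * (gb R d (2*m) i * E R d N)) (E R d N * 1) :=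
    (EqUpTo.of_eq (by ring)).trans (c2.trans (EqUpTo.of_eq (by ring)))
  exact EqUpTo.cancel (constantCoeff_E d N hd) big

theorem gb_key1 (d m : ℕ) :
    gb R d (2*m+2) 1 = (1 + X^(d*(2*m+1))) * gb R d (2*m) 0 + X^(d*1) * gb R d (2*m) 1 := by
  rw [gb_one_right, gb_one_right, gb_zero_right, mul_one, Finset.mul_sum]
  have h1 : ∀ i ∈ range (2*m), (X:R⟦X⟧)^(d*1) * X^(d*i) = X^(d*(i+1)) := by
    intro i _; rw [← pow_add]; congr 1; ring
  rw [Finset.sum_congr rfl h1]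
  rw [Finset.sum_range_succ' (fun i => (X:R⟦X⟧)^(d*i)) (2*m+1),
    Finset.sum_range_succ (fun i => (X:R⟦X⟧)^(d*(i+1))) (2*m)]
  rw [mul_zero, pow_zero]
  ring

theorem gb_key2 (d m t : ℕ) :
    gb R d (2*m+2) (t+2)
      = (1 + X^(d*(2*m+1))) * gb R d (2*m) (t+1)
        + X^(d*(2*m-t)) * gb R d (2*m) t + X^(d*(t+2)) * gb R d (2*m) (t+2) := by
  rcases lt_or_ge t (2*m) with h | h
  · have A : gb R d (2*m+2) (t+2)
        = gb R d (2*m+1) (t+1) + X^(d*(t+2)) * gb R d (2*m+1) (t+2) := gb_succ_succ d (2*m+1) (t+1)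
    have B1 : gb R d (2*m+1) (t+1) = X^(d*(2*m-t)) * gb R d (2*m) t + gb R d (2*m) (t+1) :=
      gb_B d (2*m) t
    have B2 : gb R d (2*m+1) (t+2)
        = X^(d*(2*m-(t+1))) * gb R d (2*m) (t+1) + gb R d (2*m) (t+2) := gb_B d (2*m) (t+1)
    rw [A, B1, B2]
    have hexp : (X:R⟦X⟧)^(d*(t+2)) * X^(d*(2*m-(t+1))) = X^(d*(2*m+1)) := by
      rw [← pow_add, ← Nat.left_distrib, show t+2+(2*m-(t+1)) = 2*m+1 by omega]
    linear_combination (gb R d (2*m) (t+1)) * hexp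
  · have hz1 : gb R d (2*m) (t+1) = 0 := gb_eq_zero d (by omega)
    have hz2 : gb R d (2*m) (t+2) = 0 := gb_eq_zero d (by omega)
    rw [hz1, hz2, mul_zero, mul_zero, add_zero, zero_add]
    rcases eq_or_lt_of_le h with heq | hlt
    · rw [← heq, Nat.sub_self, mul_zero, pow_zero, one_mul, gb_self, gb_self]
    · rw [gb_eq_zero d (by omega : 2*m+2 < t+2), gb_eq_zero d (by omega : 2*m < t), mul_zero]

/-! ### The finite Jacobi triple product, over `ℤ[z]⟦X⟧` -/

/-- The variable `z`, as a power series constant. -/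
noncomputable def Zv : (Polynomial ℤ)⟦X⟧ := PowerSeries.C (R := Polynomial ℤ) Polynomial.X

/-- Term of the Jacobi sum. -/
noncomputable def tm (d m i : ℕ) : (Polynomial ℤ)⟦X⟧ :=
  (-1)^(m+i) * gb (Polynomial ℤ) d (2*m) i * X^(d * tri ((i:ℤ) - (m:ℤ))) * Zv^i

noncomputable def jt (d m : ℕ) : (Polynomial ℤ)⟦X⟧ := ∑ i ∈ range (2*m+1), tm d m i

noncomputable def tA (d m i : ℕ) : (Polynomial ℤ)⟦X⟧ :=
  if 1 ≤ i then (-1)^(m+1+i) * gb (Polynomial ℤ) d (2*m) (i-1)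
    * X^(d * tri ((i:ℤ) - (m:ℤ) - 1)) * Zv^i else 0

noncomputable def tB (d m i : ℕ) : (Polynomial ℤ)⟦X⟧ :=
  if 1 ≤ i then (-1)^(m+1+i) * gb (Polynomial ℤ) d (2*m) (i-1)
    * (X^(d * tri ((i:ℤ) - (m:ℤ) - 1)) * X^(d*(2*m+1))) * Zv^i else 0

noncomputable def tC (d m i : ℕ) : (Polynomial ℤ)⟦X⟧ :=
  if 2 ≤ i then (-1)^(m+1+i) * gb (Polynomial ℤ) d (2*m) (i-2)
    * (X^(d * tri ((i:ℤ) - (m:ℤ) - 1)) * X^(d*(2*m+2-i))) * Zv^i else 0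

noncomputable def tD (d m i : ℕ) : (Polynomial ℤ)⟦X⟧ :=
  (-1)^(m+1+i) * gb (Polynomial ℤ) d (2*m) i
    * (X^(d * tri ((i:ℤ) - (m:ℤ) - 1)) * X^(d*i)) * Zv^i

theorem tm_split (d m : ℕ) : ∀ i ∈ range (2*m+3),
    tm d (m+1) i = tA d m i + tB d m i + tC d m i + tD d m i := by
  intro i _
  match i with
  | 0 =>
    rw [tA, tB, tC, tD, if_neg (by omega), if_neg (by omega), if_neg (by omega), tm]
    rw [show ((0:ℕ):ℤ) - ((m+1:ℕ):ℤ) = ((0:ℕ):ℤ) - (m:ℤ) - 1 by push_cast; ring]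
    rw [show 2*(m+1) = 2*m+2 by ring]
    rw [show gb (Polynomial ℤ) d (2*m+2) 0 = 1 from gb_zero_right d _,
      show gb (Polynomial ℤ) d (2*m) 0 = 1 from gb_zero_right d _]
    ring
  | 1 =>
    rw [tA, tB, tC, tD, if_pos (by omega), if_pos (by omega), if_neg (by omega), tm]
    rw [show ((1:ℕ):ℤ) - ((m+1:ℕ):ℤ) = ((1:ℕ):ℤ) - (m:ℤ) - 1 by push_cast; ring]
    rw [show 2*(m+1) = 2*m+2 by ring, gb_key1]
    norm_num
    ring
  | (t+2) =>
    rw [tA, tB, tC, tD, if_pos (by omega), if_pos (by omega), if_pos (by omega), tm]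
    rw [show ((t+2:ℕ):ℤ) - ((m+1:ℕ):ℤ) = ((t+2:ℕ):ℤ) - (m:ℤ) - 1 by push_cast; ring]
    rw [show 2*(m+1) = 2*m+2 by ring, gb_key2]
    rw [show t+2-1 = t+1 by omega, show t+2-2 = t by omega,
      show 2*m+2-(t+2) = 2*m-t by omega]
    ring

theorem sum_tA (d m : ℕ) : ∑ i ∈ range (2*m+3), tA d m i = jt d m * Zv := by
  rw [show 2*m+3 = (2*m+2)+1 by ring, Finset.sum_range_succ' (tA d m) (2*m+2)]
  rw [show tA d m 0 = 0 from if_neg (by omega), add_zero, Finset.sum_range_succ]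
  have htop : tA d m (2*m+1+1) = 0 := by
    rw [tA, if_pos (by omega), show 2*m+1+1-1 = 2*m+1 by omega,
      gb_eq_zero d (by omega)]
    ring
  rw [htop, add_zero, jt, Finset.sum_mul]
  refine Finset.sum_congr rfl fun i _ => ?_
  rw [tA, if_pos (by omega), show i+1-1 = i by omega,
    show ((i+1:ℕ):ℤ) - (m:ℤ) - 1 = (i:ℤ) - (m:ℤ) by push_cast; ring, tm,
    show m+1+(i+1) = (m+i)+2 by ring, pow_add]
  ring

theorem sum_tB (d m : ℕ) :
    ∑ i ∈ range (2*m+3), tB d m i = jt d m * (Zv * X^(d*(2*m+1))) := by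
  rw [show 2*m+3 = (2*m+2)+1 by ring, Finset.sum_range_succ' (tB d m) (2*m+2)]
  rw [show tB d m 0 = 0 from if_neg (by omega), add_zero, Finset.sum_range_succ]
  have htop : tB d m (2*m+1+1) = 0 := by
    rw [tB, if_pos (by omega), show 2*m+1+1-1 = 2*m+1 by omega,
      gb_eq_zero d (by omega)]
    ring
  rw [htop, add_zero, jt, Finset.sum_mul]
  refine Finset.sum_congr rfl fun i _ => ?_
  rw [tB, if_pos (by omega), show i+1-1 = i by omega,
    show ((i+1:ℕ):ℤ) - (m:ℤ) - 1 = (i:ℤ) - (m:ℤ) by push_cast; ring, tm,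
    show m+1+(i+1) = (m+i)+2 by ring, pow_add]
  ring

theorem sum_tC (d m : ℕ) :
    ∑ i ∈ range (2*m+3), tC d m i = jt d m * (-(Zv^2 * X^(d*(m+1)))) := by
  rw [show 2*m+3 = (2*m+2)+1 by ring, Finset.sum_range_succ' (tC d m) (2*m+2)]
  rw [show tC d m 0 = 0 from if_neg (by omega), add_zero]
  rw [Finset.sum_range_succ' (fun i => tC d m (i+1)) (2*m+1)]
  rw [show tC d m (0+1) = 0 from if_neg (by omega), add_zero, jt, Finset.sum_mul]
  refine Finset.sum_congr rfl fun i hi => ?_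
  rw [Finset.mem_range] at hi
  rw [tC, if_pos (by omega), show i+1+1-2 = i by omega,
    show ((i+1+1:ℕ):ℤ) - (m:ℤ) - 1 = ((i:ℤ) - (m:ℤ)) + 1 by push_cast; ring,
    show 2*m+2-(i+1+1) = 2*m-i by omega, tm,
    show m+1+(i+1+1) = (m+i)+3 by ring, pow_add]
  have hexp : (X : (Polynomial ℤ)⟦X⟧)^(d * tri ((i:ℤ) - (m:ℤ) + 1)) * X^(d*(2*m-i))
      = X^(d * tri ((i:ℤ) - (m:ℤ))) * X^(d*(m+1)) := by
    rw [← pow_add, ← pow_add, ← Nat.left_distrib, ← Nat.left_distrib]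
    congr 1
    congr 1
    have h := tri_succ ((i:ℤ) - (m:ℤ))
    omega
  linear_combination ((-1:(Polynomial ℤ)⟦X⟧)^(m+i) * (-1)^3 * gb (Polynomial ℤ) d (2*m) i * Zv^(i+1+1)) * hexp
theorem sum_tD (d m : ℕ) :
    ∑ i ∈ range (2*m+3), tD d m i = jt d m * (-(X^(d*m))) := by
  rw [show 2*m+3 = (2*m+2)+1 by ring, Finset.sum_range_succ]
  have htop1 : tD d m (2*m+2) = 0 := by
    rw [tD, gb_eq_zero d (by omega)]; ring
  rw [htop1, add_zero, Finset.sum_range_succ]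
  have htop2 : tD d m (2*m+1) = 0 := by
    rw [tD, gb_eq_zero d (by omega)]; ring
  rw [htop2, add_zero, jt, Finset.sum_mul]
  refine Finset.sum_congr rfl fun i hi => ?_
  rw [Finset.mem_range] at hi
  rw [tD, tm, show m+1+i = (m+i)+1 by ring, pow_add]
  have hexp : (X : (Polynomial ℤ)⟦X⟧)^(d * tri ((i:ℤ) - (m:ℤ) - 1)) * X^(d*i)
      = X^(d * tri ((i:ℤ) - (m:ℤ))) * X^(d*m) := by
    rw [← pow_add, ← pow_add, ← Nat.left_distrib, ← Nat.left_distrib]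
    congr 1
    congr 1
    have h := tri_succ ((i:ℤ) - (m:ℤ) - 1)
    rw [show (i:ℤ) - (m:ℤ) - 1 + 1 = (i:ℤ) - (m:ℤ) by ring] at h
    omega
  linear_combination ((-1:(Polynomial ℤ)⟦X⟧)^(m+i) * (-1)^1 * gb (Polynomial ℤ) d (2*m) i * Zv^i) * hexp

theorem jtp (d : ℕ) (m : ℕ) :
    ∏ k ∈ Icc 1 m, ((1 - Zv * X^(d*k)) * (Zv - X^(d*(k-1)))) = jt d m := by
  induction m with
  | zero =>
    rw [show (Icc 1 0 : Finset ℕ) = ∅ by rfl, Finset.prod_empty, jt]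
    rw [show 2*0+1 = 1 by ring, Finset.sum_range_one, tm]
    rw [show ((0:ℕ):ℤ) - ((0:ℕ):ℤ) = 0 by ring, tri_zero]
    rw [show gb (Polynomial ℤ) d (2*0) 0 = 1 from gb_zero_right d _]
    ring
  | succ m ih =>
    rw [Finset.prod_Icc_succ_top (by omega : 1 ≤ m+1), ih, Nat.add_sub_cancel]
    have : jt d (m+1) = ∑ i ∈ range (2*m+3), tm d (m+1) i := by
      rw [jt, show 2*(m+1)+1 = 2*m+3 by ring]
    rw [this, Finset.sum_congr rfl (tm_split d m)]
    rw [Finset.sum_add_distrib, Finset.sum_add_distrib, Finset.sum_add_distrib,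
      sum_tA, sum_tB, sum_tC, sum_tD]
    ring

/-! ### From the triple product to Jacobi's cube identity -/

theorem le_tri_int (j : ℤ) (h : 0 ≤ j) : j ≤ (tri j : ℤ) := by
  lift j to ℕ using h
  exact_mod_cast tri_nat_le j

theorem neg_le_tri_int (j : ℤ) : -j - 1 ≤ (tri j : ℤ) := by
  rcases le_or_gt 0 j with h | h
  · have := Nat.cast_nonneg (α := ℤ) (tri j); omega
  · have h2 : tri (-j-1) = tri j := tri_neg j
    have h3 : (0:ℤ) ≤ -j - 1 := by omega
    have := le_tri_int (-j-1) h3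
    omega

theorem mul_X_pow_eqUpTo_zero {N e : ℕ} (he : N < e) (g : R⟦X⟧) :
    EqUpTo N (g * X ^ e) 0 := by
  intro n hn
  rw [coeff_mul, map_zero]
  refine Finset.sum_eq_zero fun p hp => ?_
  rw [Finset.HasAntidiagonal.mem_antidiagonal] at hp
  rw [coeff_X_pow, if_neg (by omega), mul_zero]

theorem EqUpTo.map {R' : Type*} [CommRing R'] (σ : R →+* R') {N : ℕ} {f g : R⟦X⟧}
    (h : EqUpTo N f g) : EqUpTo N (PowerSeries.map σ f) (PowerSeries.map σ g) := by
  intro n hn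
  rw [coeff_map, coeff_map, h n hn]

theorem map_E {R' : Type*} [CommRing R'] (σ : R →+* R') (d L : ℕ) :
    PowerSeries.map σ (E R d L) = E R' d L := by
  rw [E, E, map_prod]
  refine Finset.prod_congr rfl fun k _ => ?_
  rw [map_sub, map_one, map_pow, PowerSeries.map_X]

theorem tri_lb (j : ℤ) : j ≤ (tri j : ℤ) := by
  rcases le_or_gt 0 j with h | h
  · exact le_tri_int j h
  · exact le_trans h.le (Nat.cast_nonneg _)

noncomputable def jt1 (d m : ℕ) : (Polynomial ℤ)⟦X⟧ :=
  ∑ i ∈ range (2*m+1), (-1)^(m+i) * X^(d * tri ((i:ℤ) - (m:ℤ))) * Zv^i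

theorem step1 (d : ℕ) (hd : 1 ≤ d) (N : ℕ) :
    EqUpTo N (E (Polynomial ℤ) d N * jt d (2*N+2)) (jt1 d (2*N+2)) := by
  set m := 2*N+2 with hm
  rw [jt, jt1, Finset.mul_sum]
  refine EqUpTo.sum fun i hi => ?_
  rw [Finset.mem_range] at hi
  rcases le_or_gt (d * tri ((i:ℤ) - (m:ℤ))) N with h | h
  · have htri : tri ((i:ℤ) - (m:ℤ)) ≤ N :=
      le_trans (Nat.le_mul_of_pos_left _ (by omega : 0 < d)) h
    have h1 := tri_lb ((i:ℤ) - (m:ℤ))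
    have h2 := neg_le_tri_int ((i:ℤ) - (m:ℤ))
    have hNi : N ≤ i := by omega
    have hNi2 : N + i ≤ 2*m := by omega
    have hge := gb_E_eqUpTo (R := Polynomial ℤ) d hd hNi hNi2
    have hmul := hge.mul (EqUpTo.refl (N := N)
      (f := (-1:(Polynomial ℤ)⟦X⟧)^(m+i) * X^(d * tri ((i:ℤ) - (m:ℤ))) * Zv^i))
    refine (EqUpTo.of_eq ?_).trans (hmul.trans (EqUpTo.of_eq (one_mul _)))
    rw [tm]; ring
  · have l1 : EqUpTo N (E (Polynomial ℤ) d N * tm d m i) 0 := by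
      refine (EqUpTo.of_eq ?_).trans
        (mul_X_pow_eqUpTo_zero h (E (Polynomial ℤ) d N * ((-1)^(m+i) * gb (Polynomial ℤ) d (2*m) i * Zv^i)))
      rw [tm]; ring
    have l2 : EqUpTo N ((-1:(Polynomial ℤ)⟦X⟧)^(m+i) * X^(d * tri ((i:ℤ) - (m:ℤ))) * Zv^i) 0 := by
      refine (EqUpTo.of_eq ?_).trans
        (mul_X_pow_eqUpTo_zero h ((-1:(Polynomial ℤ)⟦X⟧)^(m+i) * Zv^i))
      ring
    exact l1.trans l2.symm

noncomputable def W (d m : ℕ) : (Polynomial ℤ)⟦X⟧ :=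
  ∑ j ∈ range m, (-1)^j * X^(d * tri (j:ℤ)) * Zv^(m-1-j) * (∑ i ∈ range (2*j+1), Zv^i)

theorem jt1_eq (d m : ℕ) (hm : 1 ≤ m) :
    jt1 d m = (Zv - 1) * W d m
      + (-1)^(m+2*m) * X^(d * tri (((2*m:ℕ):ℤ) - (m:ℤ))) * Zv^(2*m) := by
  rw [jt1, Finset.sum_range_succ]
  congr 1
  rw [Finset.range_eq_Ico, ← Finset.sum_Ico_consecutive _ (Nat.zero_le m) (by omega : m ≤ 2*m)]
  rw [← Finset.range_eq_Ico]
  rw [Finset.sum_Ico_eq_sum_range, show 2*m - m = m by omega]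
  rw [← Finset.sum_range_reflect]
  rw [W, Finset.mul_sum, ← Finset.sum_add_distrib]
  refine Finset.sum_congr rfl fun j hj => ?_
  rw [Finset.mem_range] at hj
  have e1 : ((m-1-j:ℕ):ℤ) - (m:ℤ) = -(j:ℤ) - 1 := by omega
  have e2 : ((m+j:ℕ):ℤ) - (m:ℤ) = (j:ℤ) := by omega
  rw [e1, e2, tri_neg]
  have s1 : (-1:(Polynomial ℤ)⟦X⟧)^(m+(m-1-j)) = (-1)^(j+1) := by
    rw [show m+(m-1-j) = j+1+2*(m-1-j) by omega, pow_add, pow_mul]; norm_num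
  have s2 : (-1:(Polynomial ℤ)⟦X⟧)^(m+(m+j)) = (-1)^j := by
    rw [show m+(m+j) = j+2*m by omega, pow_add, pow_mul]; norm_num
  rw [s1, s2]
  have hgeom : (∑ i ∈ range (2*j+1), Zv^i) * (Zv - 1) = Zv^(2*j+1) - 1 :=
    geom_sum_mul Zv (2*j+1)
  have hp : Zv^(m+j) = Zv^(m-1-j) * Zv^(2*j+1) := by
    rw [← pow_add]; congr 1; omega
  rw [hp, pow_succ]
  linear_combination (-((-1:(Polynomial ℤ)⟦X⟧)^j * X^(d * tri (j:ℤ)) * Zv^(m-1-j))) * hgeom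

theorem step2 (d : ℕ) (hd : 1 ≤ d) (N : ℕ) :
    EqUpTo N (E (Polynomial ℤ) d N * jt d (2*N+2)) ((Zv - 1) * W d (2*N+2)) := by
  refine (step1 d hd N).trans ?_
  rw [jt1_eq d (2*N+2) (by omega)]
  have htop : EqUpTo N ((-1:(Polynomial ℤ)⟦X⟧)^(2*N+2+2*(2*N+2))
      * X^(d * tri (((2*(2*N+2):ℕ):ℤ) - ((2*N+2:ℕ):ℤ))) * Zv^(2*(2*N+2)) ) 0 := by
    have harg : ((2*(2*N+2):ℕ):ℤ) - ((2*N+2:ℕ):ℤ) = ((2*N+2:ℕ):ℤ) := by push_cast; ring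
    rw [harg]
    have hbig : N < d * tri ((2*N+2:ℕ):ℤ) := by
      have h1 := le_tri_int ((2*N+2:ℕ):ℤ) (by positivity)
      have h2 : tri ((2*N+2:ℕ):ℤ) ≤ d * tri ((2*N+2:ℕ):ℤ) :=
        Nat.le_mul_of_pos_left _ (by omega : 0 < d)
      omega
    have hz := mul_X_pow_eqUpTo_zero (N := N) hbig
      ((-1:(Polynomial ℤ)⟦X⟧)^(2*N+2+2*(2*N+2)) * Zv^(2*(2*N+2)))
    refine (EqUpTo.of_eq (?_ : _ = (-1:(Polynomial ℤ)⟦X⟧)^(2*N+2+2*(2*N+2)) * Zv^(2*(2*N+2)) * X^(d * tri (((2*N+2:ℕ)):ℤ)))).trans hz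
    ring
  have := (EqUpTo.refl (N := N) (f := (Zv - 1) * W d (2*N+2))).add htop
  refine this.trans (EqUpTo.of_eq (add_zero _))

theorem prod_shift (d m : ℕ) (hm : 1 ≤ m) :
    ∏ k ∈ Icc 1 m, (Zv - X^(d*(k-1)))
      = (Zv - 1) * ∏ k ∈ Icc 1 (m-1), (Zv - X^(d*k)) := by
  have h1 : ∏ k ∈ Icc 1 m, (Zv - X^(d*(k-1))) = ∏ i ∈ range m, (Zv - X^(d*i)) := by
    rw [← Finset.Ico_add_one_right_eq_Icc, Finset.prod_Ico_eq_prod_range]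
    refine Finset.prod_congr (by rw [Nat.add_sub_cancel]) fun i _ => ?_
    rw [Nat.add_comm 1 i, Nat.add_sub_cancel]
  have h3 : ∏ i ∈ range (m-1), (Zv - X^(d*(i+1))) = ∏ k ∈ Icc 1 (m-1), (Zv - X^(d*k)) := by
    rw [← Finset.Ico_add_one_right_eq_Icc, Finset.prod_Ico_eq_prod_range]
    refine (Finset.prod_congr (by rw [Nat.add_sub_cancel]) fun i _ => ?_).symm
    rw [Nat.add_comm 1 i]
  obtain ⟨m', rfl⟩ : ∃ m', m = m'+1 := ⟨m-1, by omega⟩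
  rw [h1, Finset.prod_range_succ', ← h3]
  simp only [Nat.add_sub_cancel, mul_zero, pow_zero]
  ring

theorem cancel_Zv {N : ℕ} {F G : (Polynomial ℤ)⟦X⟧}
    (h : EqUpTo N ((Zv - 1) * F) ((Zv - 1) * G)) : EqUpTo N F G := by
  intro n hn
  have h2 := h n hn
  have hZ : (Zv - 1 : (Polynomial ℤ)⟦X⟧) = PowerSeries.C (Polynomial.X - 1) := by
    rw [map_sub, map_one, Zv]
  rw [hZ, coeff_C_mul, coeff_C_mul] at h2
  have hne : (Polynomial.X - 1 : Polynomial ℤ) ≠ 0 := by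
    have := Polynomial.X_sub_C_ne_zero (R := ℤ) 1
    simpa using this
  exact mul_left_cancel₀ hne h2

theorem step3 (d : ℕ) (hd : 1 ≤ d) (N : ℕ) :
    EqUpTo N (E (Polynomial ℤ) d N *
        ((∏ k ∈ Icc 1 (2*N+2), (1 - Zv * X^(d*k))) * ∏ k ∈ Icc 1 (2*N+1), (Zv - X^(d*k))))
      (W d (2*N+2)) := by
  apply cancel_Zv (N := N)
  have hfac : (Zv - 1) * (E (Polynomial ℤ) d N *
        ((∏ k ∈ Icc 1 (2*N+2), (1 - Zv * X^(d*k))) * ∏ k ∈ Icc 1 (2*N+1), (Zv - X^(d*k))))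
      = E (Polynomial ℤ) d N * jt d (2*N+2) := by
    rw [← jtp d (2*N+2), Finset.prod_mul_distrib, prod_shift d (2*N+2) (by omega),
      show 2*N+2-1 = 2*N+1 by omega]
    ring
  rw [hfac]
  exact step2 d hd N

/-- Truncated Jacobi cube identity. -/
theorem jacobi (d : ℕ) (hd : 1 ≤ d) (N : ℕ) :
    EqUpTo N ((E ℤ d N)^3)
      (∑ j ∈ range (2*N+2),
        PowerSeries.C (R := ℤ) ((-1)^j * (2*(j:ℤ)+1)) * X^(d * tri (j:ℤ))) := by
  have hmap := (step3 d hd N).map (Polynomial.evalRingHom (1:ℤ))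
  have hZv : PowerSeries.map (Polynomial.evalRingHom (1:ℤ)) Zv = 1 := by
    rw [Zv, PowerSeries.map_C]
    simp
  have hE1 : PowerSeries.map (Polynomial.evalRingHom (1:ℤ)) (E (Polynomial ℤ) d N *
        ((∏ k ∈ Icc 1 (2*N+2), (1 - Zv * X^(d*k))) * ∏ k ∈ Icc 1 (2*N+1), (Zv - X^(d*k))))
      = E ℤ d N * (E ℤ d (2*N+2) * E ℤ d (2*N+1)) := by
    rw [map_mul, map_mul, map_E, map_prod, map_prod]
    congr 1
    congr 1
    · refine Finset.prod_congr rfl fun k _ => ?_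
      rw [map_sub, map_one, map_mul, map_pow, PowerSeries.map_X, hZv, one_mul]
    · refine Finset.prod_congr rfl fun k _ => ?_
      rw [map_sub, map_pow, PowerSeries.map_X, hZv]
  have hW : PowerSeries.map (Polynomial.evalRingHom (1:ℤ)) (W d (2*N+2)) = ∑ j ∈ range (2*N+2),
      PowerSeries.C (R := ℤ) ((-1)^j * (2*(j:ℤ)+1)) * X^(d * tri (j:ℤ)) := by
    rw [W, map_sum]
    refine Finset.sum_congr rfl fun j _ => ?_
    rw [map_mul, map_mul, map_mul, map_pow, map_pow, map_pow, PowerSeries.map_X, hZv,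
      map_neg, map_one, map_sum]
    have hinner : ∑ i ∈ range (2*j+1), PowerSeries.map (Polynomial.evalRingHom (1:ℤ)) (Zv^i) = ((2*j+1 : ℕ) : ℤ⟦X⟧) := by
      have : ∀ i ∈ range (2*j+1), PowerSeries.map (Polynomial.evalRingHom (1:ℤ)) (Zv^i) = 1 := fun i _ => by rw [map_pow, hZv, one_pow]
      rw [Finset.sum_congr rfl this, Finset.sum_const, Finset.card_range, nsmul_eq_mul, mul_one]
    rw [hinner]
    rw [show PowerSeries.C (R := ℤ) ((-1)^j * (2*(j:ℤ)+1)) = (-1:ℤ⟦X⟧)^j * ((2*j+1 : ℕ) : ℤ⟦X⟧) by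
      rw [map_mul, map_pow, map_neg, map_one, ← map_natCast (PowerSeries.C (R := ℤ)) (2*j+1)]
      push_cast
      ring]
    rw [one_pow, mul_one]
    ring
  rw [hE1, hW] at hmap
  refine EqUpTo.trans ?_ hmap
  have t1 : EqUpTo N (E ℤ d (2*N+2)) (E ℤ d N) := E_tail d hd (by omega)
  have t2 : EqUpTo N (E ℤ d (2*N+1)) (E ℤ d N) := E_tail d hd (by omega)
  refine EqUpTo.trans (EqUpTo.of_eq (by ring)) ((EqUpTo.refl.mul (t1.symm.mul t2.symm)))

/-- The partition-type product `∏_{k=1}^{L} (1-X^{3k})(1-X^k)^3`. -/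
noncomputable def BB (L : ℕ) : ℤ⟦X⟧ :=
  ∏ k ∈ Finset.Icc 1 L, ((1 - X ^ (3*k)) * (1 - X ^ k) ^ 3)

theorem constantCoeff_BB (L : ℕ) : constantCoeff (R := ℤ) (BB L) = 1 := by
  rw [BB, map_prod]
  refine Finset.prod_eq_one fun k hk => ?_
  rw [Finset.mem_Icc] at hk
  rw [map_mul, map_sub, map_one, map_pow, constantCoeff_X, zero_pow (by omega : 3*k ≠ 0),
    map_pow, map_sub, map_one, map_pow, constantCoeff_X, zero_pow (by omega : k ≠ 0)]
  norm_num

theorem coeff_E3 (d : ℕ) (hd : 1 ≤ d) (N p : ℕ) (hp : p ≤ N) :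
    coeff (R := ℤ) p ((E ℤ d N)^3)
      = ∑ j ∈ range (2*N+2), (-1)^j * (2*(j:ℤ)+1) * (if p = d * tri (j:ℤ) then 1 else 0) := by
  rw [jacobi d hd N p hp, map_sum]
  refine Finset.sum_congr rfl fun j _ => ?_
  rw [coeff_C_mul, coeff_X_pow]

theorem sum_antidiagonal_if (M e : ℕ) (f : ℕ → ℤ) :
    ∑ x ∈ antidiagonal M, (if x.1 = e then f x.2 else 0)
      = if e ≤ M then f (M - e) else 0 := by
  rcases le_or_gt e M with h | h
  · rw [if_pos h, Finset.sum_eq_single ((e, M - e))]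
    · rw [if_pos rfl]
    · rintro ⟨b1, b2⟩ hb hne
      rw [Finset.HasAntidiagonal.mem_antidiagonal] at hb
      have hb1 : b1 ≠ e := by
        rintro rfl
        exact hne (by rw [Prod.mk.injEq]; exact ⟨rfl, by omega⟩)
      rw [if_neg hb1]
    · intro habs
      exact absurd (Finset.HasAntidiagonal.mem_antidiagonal.mpr (by omega : e + (M - e) = M)) habs
  · rw [if_neg (by omega)]
    refine Finset.sum_eq_zero fun x hx => ?_
    rw [Finset.HasAntidiagonal.mem_antidiagonal] at hx
    have : x.1 ≠ e := by omega
    rw [if_neg this]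

end Cphi

open Cphi

/-- Coefficients of `∏_{k≥1} 1/((1-q^{3k})(1-q^k)^3)` (truncated product suffices). -/
noncomputable def a (n : ℕ) : ℤ :=
  PowerSeries.coeff (R := ℤ) n (PowerSeries.invOfUnit
    (∏ k ∈ Finset.Icc 1 n, ((1 - PowerSeries.X ^ (3 * k)) * (1 - PowerSeries.X ^ k) ^ 3)) 1)

/-- `a` extended to the integers by `0` on negative arguments. -/
noncomputable def aext (j : ℤ) : ℤ := if 0 ≤ j then a j.toNat else 0

/-- Coefficients of `9 q ∏_{k≥1} (1-q^{9k})^3/((1-q^{3k})(1-q^k)^3)`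
(truncated products suffice for the coefficient of `q^n`). -/
noncomputable def cphi3' (n : ℕ) : ℤ :=
  PowerSeries.coeff (R := ℤ) n ((9 : ℤ⟦X⟧) * PowerSeries.X *
    (∏ k ∈ Finset.Icc 1 n, (1 - PowerSeries.X ^ (9 * k)) ^ 3) *
    PowerSeries.invOfUnit
      (∏ k ∈ Finset.Icc 1 n, ((1 - PowerSeries.X ^ (3 * k)) * (1 - PowerSeries.X ^ k) ^ 3)) 1)

namespace Cphi

theorem a_spec {q N : ℕ} (hq : q ≤ N) :
    coeff (R := ℤ) q (invOfUnit (BB N) 1) = a q := by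
  have hcongr : EqUpTo q (BB N) (BB q) := by
    refine prod_Icc_tail_eqUpTo hq fun k hk => ?_
    rw [Finset.mem_Ioc] at hk
    have e1 : EqUpTo q (1 - X^(3*k) : ℤ⟦X⟧) 1 := one_sub_X_pow_eqUpTo_one (by omega)
    have e2 : EqUpTo q (1 - X^k : ℤ⟦X⟧) 1 := one_sub_X_pow_eqUpTo_one (by omega)
    refine (EqUpTo.of_eq (by ring)).trans (((e1.mul (e2.mul (e2.mul e2)))).trans
      (EqUpTo.of_eq (by ring)))
  have h := invOfUnit_eqUpTo (constantCoeff_BB N) (constantCoeff_BB q) hcongr q le_rfl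
  rw [h]
  rfl

theorem term_dvd (ha6 : ∀ n : ℕ, a (15 * n + 6) ≡ 0 [ZMOD 5])
    (ha12 : ∀ n : ℕ, a (15 * n + 12) ≡ 0 [ZMOD 5]) (n j : ℕ) :
    (5:ℤ) ∣ (if 9 * tri (j:ℤ) ≤ 45*n+6
      then (-1)^j * (2*(j:ℤ)+1) * a (45*n+6 - 9*tri (j:ℤ)) else 0) := by
  split
  case isFalse => exact dvd_zero 5
  case isTrue hcond =>
  have ht2 : (tri ((j:ℕ):ℤ) : ℤ) * 2 = (j:ℤ) * ((j:ℤ) + 1) := tri_cast (j:ℤ)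
  set t := tri ((j:ℕ):ℤ) with htdef
  obtain ⟨s, r, hr, hj⟩ : ∃ s r, r < 5 ∧ j = 5*s + r := ⟨j/5, j%5, by omega, by omega⟩
  have hsplit : r = 0 ∨ r = 1 ∨ r = 2 ∨ r = 3 ∨ r = 4 := by omega
  have hj' : (j:ℤ) = 5*(s:ℤ) + (r:ℤ) := by exact_mod_cast congrArg (Nat.cast : ℕ → ℤ) hj
  rcases hsplit with hr0 | hr1 | hr2 | hr3 | hr4
  · -- t ≡ 0 mod 5
    have key : (t:ℤ)*2 = 5*(5*(s:ℤ)*s + s) := by rw [ht2, hj', hr0]; push_cast; ring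
    have ht5 : t % 5 = 0 := by omega
    obtain ⟨u, hu⟩ : ∃ u, t = 5*u := ⟨t/5, by omega⟩
    have hidx : 45*n+6 - 9*t = 15*(3*(n-u))+6 := by omega
    rw [hidx]
    exact Dvd.dvd.mul_left (Int.modEq_zero_iff_dvd.mp (ha6 (3*(n-u)))) _
  · have key : (t:ℤ)*2 - 2 = 5*(5*(s:ℤ)*s + 3*s) := by rw [ht2, hj', hr1]; push_cast; ring
    have ht5 : t % 5 = 1 := by omega
    obtain ⟨u, hu⟩ : ∃ u, t = 5*u+1 := ⟨t/5, by omega⟩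
    have hidx : 45*n+6 - 9*t = 15*(3*(n-u-1)+2)+12 := by omega
    rw [hidx]
    exact Dvd.dvd.mul_left (Int.modEq_zero_iff_dvd.mp (ha12 (3*(n-u-1)+2))) _
  · -- 5 ∣ 2j+1
    have key : 2*(j:ℤ)+1 = 5*(2*(s:ℤ)+1) := by rw [hj', hr2]; push_cast; ring
    refine Dvd.dvd.mul_right (Dvd.dvd.mul_left ⟨2*(s:ℤ)+1, key⟩ _) _
  · have key : (t:ℤ)*2 - 12 = 5*(5*(s:ℤ)*s + 7*s) := by rw [ht2, hj', hr3]; push_cast; ring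
    have ht5 : t % 5 = 1 := by omega
    obtain ⟨u, hu⟩ : ∃ u, t = 5*u+1 := ⟨t/5, by omega⟩
    have hidx : 45*n+6 - 9*t = 15*(3*(n-u-1)+2)+12 := by omega
    rw [hidx]
    exact Dvd.dvd.mul_left (Int.modEq_zero_iff_dvd.mp (ha12 (3*(n-u-1)+2))) _
  · have key : (t:ℤ)*2 = 5*(5*(s:ℤ)*s + 9*s + 4) := by rw [ht2, hj', hr4]; push_cast; ring
    have ht5 : t % 5 = 0 := by omega
    obtain ⟨u, hu⟩ : ∃ u, t = 5*u := ⟨t/5, by omega⟩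
    have hidx : 45*n+6 - 9*t = 15*(3*(n-u))+6 := by omega
    rw [hidx]
    exact Dvd.dvd.mul_left (Int.modEq_zero_iff_dvd.mp (ha6 (3*(n-u)))) _

end Cphi

theorem cphi3'_cong_7
    (ha6 : ∀ n : ℕ, a (15 * n + 6) ≡ 0 [ZMOD 5])
    (ha12 : ∀ n : ℕ, a (15 * n + 12) ≡ 0 [ZMOD 5]) :
    ∀ n : ℕ, cphi3' (45 * n + 7) ≡ 0 [ZMOD 5] := by
  intro n
  refine Int.modEq_zero_iff_dvd.mpr ?_
  have hval : cphi3' (45*n+7)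
      = 9 * PowerSeries.coeff (R := ℤ) (45*n+6)
          ((Cphi.E ℤ 9 (45*n+7))^3 * PowerSeries.invOfUnit (Cphi.BB (45*n+7)) 1) := by
    rw [cphi3']
    have hP9 : (∏ k ∈ Finset.Icc 1 (45*n+7), (1 - PowerSeries.X ^ (9*k)) ^ 3 : ℤ⟦X⟧)
        = (Cphi.E ℤ 9 (45*n+7))^3 := by
      rw [Cphi.E, Finset.prod_pow]
    have h9 : ((9:ℤ⟦X⟧)) = PowerSeries.C (R := ℤ) 9 := (map_ofNat (PowerSeries.C (R := ℤ)) 9).symm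
    rw [show ((9 : ℤ⟦X⟧) * PowerSeries.X *
        (∏ k ∈ Finset.Icc 1 (45*n+7), (1 - PowerSeries.X ^ (9 * k)) ^ 3) *
        PowerSeries.invOfUnit
          (∏ k ∈ Finset.Icc 1 (45*n+7),
            ((1 - PowerSeries.X ^ (3 * k)) * (1 - PowerSeries.X ^ k) ^ 3)) 1)
        = PowerSeries.C (R := ℤ) 9 * (PowerSeries.X *
            ((Cphi.E ℤ 9 (45*n+7))^3 * PowerSeries.invOfUnit (Cphi.BB (45*n+7)) 1)) by
      rw [← hP9, h9, Cphi.BB]; ring]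
    rw [PowerSeries.coeff_C_mul, show 45*n+7 = (45*n+6)+1 by omega,
      PowerSeries.coeff_succ_X_mul]
  rw [hval]
  refine Dvd.dvd.mul_left ?_ 9
  rw [PowerSeries.coeff_mul]
  have hterm : ∀ x ∈ Finset.HasAntidiagonal.antidiagonal (45*n+6),
      PowerSeries.coeff (R := ℤ) x.1 ((Cphi.E ℤ 9 (45*n+7))^3)
        * PowerSeries.coeff (R := ℤ) x.2 (PowerSeries.invOfUnit (Cphi.BB (45*n+7)) 1)
      = ∑ j ∈ Finset.range (2*(45*n+7)+2),
          (if x.1 = 9 * Cphi.tri (j:ℤ) then ((-1)^j * (2*(j:ℤ)+1)) * a x.2 else 0) := by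
    intro x hx
    rw [Finset.HasAntidiagonal.mem_antidiagonal] at hx
    rw [Cphi.coeff_E3 9 (by omega) (45*n+7) x.1 (by omega),
      Cphi.a_spec (show x.2 ≤ 45*n+7 by omega), Finset.sum_mul]
    refine Finset.sum_congr rfl fun j _ => ?_
    split
    case isTrue h => ring
    case isFalse h => ring
  rw [Finset.sum_congr rfl hterm, Finset.sum_comm]
  refine Finset.dvd_sum fun j _ => ?_
  rw [Cphi.sum_antidiagonal_if (45*n+6) (9 * Cphi.tri (j:ℤ)) (fun q => ((-1)^j * (2*(j:ℤ)+1)) * a q)]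
  exact Cphi.term_dvd ha6 ha12 n j
end

section
/- Define cφ3'(n) by ∑_{n≥0} cφ3'(n) q^n = 9 q ∏_{n≥1} (1-q^{9n})^3 / ((1-q^{3n})(1-q^n)^3). Assuming a(15n+6) ≡ 0 (mod 5) and a(15n+12) ≡ 0 (mod 5) for all n ≥ 0 (where ∑ a(n) q^n = ∏_{n≥1}(1-q^{3n})^{-1}(1-q^n)^{-3}), one has cφ3'(45n+22) ≡ 0 (mod 5) for all n ≥ 0. -/
open PowerSeries Finset

noncomputable def Y : ℤ⟦X⟧ := X ^ 9

def Tm : ℕ → ℕ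
  | 0 => 0
  | j + 1 => Tm j + j

def T (j : ℕ) : ℕ := Tm j + j

lemma T_succ (j : ℕ) : T (j + 1) = T j + (j + 1) := by simp [T, Tm]

lemma le_T (j : ℕ) : j ≤ T j := by simp [T]

lemma two_T (j : ℕ) : 2 * T j = j * (j + 1) := by
  induction j with
  | zero => rfl
  | succ j ih => rw [T_succ]; ring_nf; ring_nf at ih; omega

noncomputable def gb : ℕ → ℤ → ℤ⟦X⟧
  | 0, k => if k = 0 then 1 else 0
  | m + 1, k => gb m k + Y ^ ((m + 1 - k).toNat) * gb m (k - 1)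

lemma gb_neg (m : ℕ) (k : ℤ) (h : k < 0) : gb m k = 0 := by
  induction m generalizing k with
  | zero => simp [gb]; omega
  | succ m ih => rw [gb, ih k h, ih (k-1) (by omega)]; ring

lemma gb_gt (m : ℕ) (k : ℤ) (h : (m : ℤ) < k) : gb m k = 0 := by
  induction m generalizing k with
  | zero => simp [gb]; omega
  | succ m ih => rw [gb, ih k (by omega), ih (k-1) (by omega)]; ring

lemma gb_zero (m : ℕ) : gb m 0 = 1 := by
  induction m with
  | zero => simp [gb]
  | succ m ih => rw [gb, ih, gb_neg m (0-1) (by omega)]; ring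

lemma pascal (m c : ℕ) (h : c ≤ m + 1) :
    gb (m + 1) (c : ℤ) = gb m (c : ℤ) + Y ^ (m + 1 - c) * gb m ((c : ℤ) - 1) := by
  have he : ((m : ℤ) + 1 - c).toNat = m + 1 - c := by omega
  rw [gb, he]

/-- `D k = ∏_{i=1}^{k} (1 - Y^i)`. -/
noncomputable def D (k : ℕ) : ℤ⟦X⟧ := ∏ i ∈ Icc 1 k, (1 - Y ^ i)

lemma D_succ (k : ℕ) : D (k + 1) = D k * (1 - Y ^ (k + 1)) := by
  rw [D, D, prod_Icc_succ_top (by omega)]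

lemma constantCoeff_D (k : ℕ) : constantCoeff (R := ℤ) (D k) = 1 := by
  rw [D, map_prod]
  apply prod_eq_one
  intro i hi
  simp only [mem_Icc] at hi
  have : (9 : ℕ) * i ≠ 0 := by omega
  simp [Y, ← pow_mul, constantCoeff_X, zero_pow (by omega : 9*i ≠ 0)]

lemma D_ne_zero (k : ℕ) : D k ≠ 0 := by
  intro h
  have := constantCoeff_D k
  rw [h] at this
  simp at this

lemma constantCoeff_one_sub_Y_pow (i : ℕ) (hi : 1 ≤ i) :
    constantCoeff (R := ℤ) (1 - Y ^ i) = 1 := by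
  simp [Y, ← pow_mul, constantCoeff_X, zero_pow (by omega : 9 * i ≠ 0)]

lemma one_sub_Y_pow_ne_zero (i : ℕ) (hi : 1 ≤ i) : (1 - Y ^ i : ℤ⟦X⟧) ≠ 0 := by
  intro h
  have := constantCoeff_one_sub_Y_pow i hi
  rw [h] at this; simp at this

lemma prod_Icc_bot (a b : ℕ) (h : a ≤ b) (f : ℕ → ℤ⟦X⟧) :
    ∏ i ∈ Icc a b, f i = f a * ∏ i ∈ Icc (a + 1) b, f i := by
  rw [← Finset.Ico_add_one_right_eq_Icc, ← Finset.Ico_add_one_right_eq_Icc,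
    Finset.prod_eq_prod_Ico_succ_bot (by omega)]

lemma prodP (m : ℕ) : ∀ k : ℕ, k ≤ m → D k * gb m (k : ℤ) = ∏ i ∈ Icc (m - k + 1) m, (1 - Y ^ i) := by
  induction m with
  | zero =>
    intro k hk
    interval_cases k
    simp [D, gb]
  | succ m ih =>
    intro k hk
    match k with
    | 0 => simp [D, gb_zero]
    | (c + 1) =>
      have hpas := pascal m (c+1) (by omega)
      have hc1 : ((c:ℤ) + 1) - 1 = (c : ℤ) := by ring
      push_cast at hpas
      rw [hc1] at hpas
      rcases Nat.lt_or_ge c m with hcm | hcm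
      · -- c + 1 ≤ m
        have h1 := ih (c+1) (by omega)
        have h2 := ih c (by omega)
        have hsplit : ∏ i ∈ Icc (m - c) m, (1 - Y ^ i)
            = (1 - Y ^ (m - c)) * ∏ i ∈ Icc (m - c + 1) m, (1 - Y ^ i) :=
          prod_Icc_bot _ _ (by omega) _
        have htop : ∏ i ∈ Icc (m - c + 1) (m + 1), (1 - Y ^ i)
            = (∏ i ∈ Icc (m - c + 1) m, (1 - Y ^ i)) * (1 - Y ^ (m + 1)) :=
          prod_Icc_succ_top (by omega) _
        push_cast
        have harg2 : m - (c+1) + 1 = m - c := by omega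
        rw [harg2] at h1
        push_cast at h1
        have hD : D (c+1) = D c * (1 - Y ^ (c+1)) := D_succ c
        rw [htop, hpas]
        have hYY : Y ^ (m - c) * Y ^ (c + 1) = Y ^ (m + 1) := by
          rw [← pow_add]; congr 1; omega
        calc D (c + 1) * (gb m ((c:ℤ) + 1) + Y ^ (m - c) * gb m (c : ℤ))
            = D (c+1) * gb m ((c:ℤ)+1) + Y ^ (m - c) * (1 - Y ^ (c + 1)) * (D c * gb m (c : ℤ)) := by
              rw [hD]; ring
          _ = (1 - Y ^ (m - c)) * ∏ i ∈ Icc (m - c + 1) m, (1 - Y ^ i)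
              + Y ^ (m - c) * (1 - Y ^ (c + 1)) * ∏ i ∈ Icc (m - c + 1) m, (1 - Y ^ i) := by
              rw [h2, h1, hsplit]
          _ = (∏ i ∈ Icc (m - c + 1) m, (1 - Y ^ i)) * (1 - Y ^ (m + 1)) := by
              rw [← hYY]; ring
      · -- c = m
        have hc : c = m := by omega
        subst hc
        have hgt : gb c ((c:ℤ) + 1) = 0 := gb_gt _ _ (by omega)
        push_cast
        rw [hpas, hgt]
        have h2 := ih c (le_refl c)
        have hcc : c - c + 1 = 1 := by omega
        rw [hcc] at h2 ⊢
        rw [prod_Icc_succ_top (by omega), ← h2, D_succ, Nat.sub_self]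
        ring

lemma contig (m c : ℕ) (h : c + 1 ≤ m) :
    (1 - Y ^ (c + 1)) * gb m ((c : ℤ) + 1) = (1 - Y ^ (m - c)) * gb m (c : ℤ) := by
  apply mul_left_cancel₀ (D_ne_zero c)
  have h1 := prodP m (c+1) h
  have h2 := prodP m c (by omega)
  have harg : m - (c + 1) + 1 = m - c := by omega
  rw [harg] at h1
  push_cast at h1
  calc D c * ((1 - Y ^ (c + 1)) * gb m ((c:ℤ) + 1))
      = D (c + 1) * gb m ((c:ℤ) + 1) := by rw [D_succ]; ring
    _ = ∏ i ∈ Icc (m - c) m, (1 - Y ^ i) := h1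
    _ = (1 - Y ^ (m - c)) * ∏ i ∈ Icc (m - c + 1) m, (1 - Y ^ i) :=
        prod_Icc_bot _ _ (by omega) _
    _ = (1 - Y ^ (m - c)) * (D c * gb m (c : ℤ)) := by rw [h2]
    _ = D c * ((1 - Y ^ (m - c)) * gb m (c : ℤ)) := by ring

lemma gb_symm (n : ℕ) : gb (2 * n + 1) ((n : ℤ) + 1) = gb (2 * n + 1) (n : ℤ) := by
  apply mul_left_cancel₀ (one_sub_Y_pow_ne_zero (n+1) (by omega))
  have := contig (2*n+1) n (by omega)
  have harg : 2 * n + 1 - n = n + 1 := by omega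
  rw [harg] at this
  exact this

/-- Summand of the finite Jacobi-type sum. -/
noncomputable def FF (n j : ℕ) : ℤ⟦X⟧ :=
  (-1)^j * (2*(j:ℤ⟦X⟧)+1) * Y^(T j) * gb (2*n+1) ((n:ℤ) - j)

/-- Telescoping certificate. -/
noncomputable def Wc (n j : ℕ) : ℤ⟦X⟧ :=
  (-1)^j * Y^(Tm j + n + 1) *
    ((2*(j:ℤ⟦X⟧)+1) * gb (2*n+1) ((n:ℤ)+1-j) + (2*(j:ℤ⟦X⟧)-1) * Y^j * gb (2*n+1) ((n:ℤ)-j))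

lemma Wc_zero (n : ℕ) : Wc n 0 = 0 := by
  simp only [Wc, Nat.cast_zero, pow_zero, one_mul, sub_zero, mul_one, gb_symm]
  ring

lemma Wc_top (n : ℕ) : Wc n (n+2) = 0 := by
  have h1 : gb (2*n+1) ((n:ℤ)+1-(n+2:ℕ)) = 0 := gb_neg _ _ (by push_cast; omega)
  have h2 : gb (2*n+1) ((n:ℤ)-(n+2:ℕ)) = 0 := gb_neg _ _ (by push_cast; omega)
  rw [Wc, h1, h2]; ring


lemma contig' (m d : ℕ) (h : d ≤ m) :
    (1 - Y^d) * gb m (d:ℤ) = (1 - Y^(m+1-d)) * gb m ((d:ℤ)-1) := by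
  cases d with
  | zero =>
    have hc : gb m ((0:ℕ):ℤ) - 1 = 0 := by norm_num [gb_zero]
    norm_num [gb_neg m (-1) (by norm_num)]
  | succ d' =>
    have hthis := contig m d' (by omega)
    have he : m + 1 - (d'+1) = m - d' := by omega
    rw [he]
    push_cast
    convert hthis using 3
    ring_nf

lemma step (n j : ℕ) (hj : j ≤ n) :
    FF (n+1) j = (1 - Y^(n+1))^2 * FF n j + (Wc n j - Wc n (j+1)) := by
  obtain ⟨d, rfl⟩ : ∃ d, n = j + d := ⟨n - j, by omega⟩
  have a1 : ((j + d : ℕ) : ℤ) - (j:ℕ) = (d:ℤ) := by push_cast; ring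
  have a2 : ((j + d : ℕ) : ℤ) + 1 - (j:ℕ) = (d:ℤ) + 1 := by push_cast; ring
  have a3 : ((j + d : ℕ) : ℤ) + 1 - ((j+1:ℕ):ℤ) = (d:ℤ) := by push_cast; ring
  have a4 : ((j + d : ℕ) : ℤ) - ((j+1:ℕ):ℤ) = (d:ℤ) - 1 := by push_cast; ring
  have a5 : ((j + d + 1 : ℕ) : ℤ) - (j:ℕ) = (d:ℤ) + 1 := by push_cast; ring
  have hp1 : gb (2*(j+d)+3) ((d:ℤ)+1)
      = gb (2*(j+d)+2) ((d:ℤ)+1) + Y^(2*j+d+2) * gb (2*(j+d)+2) ((d:ℤ)) := by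
    have hthis := pascal (2*(j+d)+2) (d+1) (by omega)
    have he : 2*(j+d)+2+1-(d+1) = 2*j+d+2 := by omega
    rw [he] at hthis
    push_cast at hthis
    have hi : 2*(j+d)+2+1 = 2*(j+d)+3 := by omega
    rw [hi] at hthis
    convert hthis using 3
    ring_nf
  have hp2 : gb (2*(j+d)+2) ((d:ℤ)+1)
      = gb (2*(j+d)+1) ((d:ℤ)+1) + Y^(2*j+d+1) * gb (2*(j+d)+1) ((d:ℤ)) := by
    have hthis := pascal (2*(j+d)+1) (d+1) (by omega)
    have he : 2*(j+d)+1+1-(d+1) = 2*j+d+1 := by omega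
    rw [he] at hthis
    push_cast at hthis
    have hi : 2*(j+d)+1+1 = 2*(j+d)+2 := by omega
    rw [hi] at hthis
    convert hthis using 3
    ring_nf
  have hp3 : gb (2*(j+d)+2) ((d:ℤ))
      = gb (2*(j+d)+1) ((d:ℤ)) + Y^(2*j+d+2) * gb (2*(j+d)+1) ((d:ℤ)-1) := by
    have hthis := pascal (2*(j+d)+1) d (by omega)
    have he : 2*(j+d)+1+1-d = 2*j+d+2 := by omega
    rw [he] at hthis
    have hi : 2*(j+d)+1+1 = 2*(j+d)+2 := by omega
    rw [hi] at hthis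
    exact hthis
  have h1 : (1 - Y^(d+1)) * gb (2*(j+d)+1) ((d:ℤ)+1)
      = (1 - Y^(2*j+d+1)) * gb (2*(j+d)+1) ((d:ℤ)) := by
    have hthis := contig (2*(j+d)+1) d (by omega)
    have he : 2*(j+d)+1-d = 2*j+d+1 := by omega
    rw [he] at hthis
    exact hthis
  have h2 : (1 - Y^d) * gb (2*(j+d)+1) ((d:ℤ))
      = (1 - Y^(2*j+d+2)) * gb (2*(j+d)+1) ((d:ℤ)-1) := by
    have hthis := contig' (2*(j+d)+1) d (by omega)
    have he : 2*(j+d)+1+1-d = 2*j+d+2 := by omega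
    rw [he] at hthis
    exact hthis
  simp only [FF, Wc, a1, a2, a3, a4, a5, T, Tm]
  rw [show 2*(j+d+1)+1 = 2*(j+d)+3 from by omega, hp1, hp2, hp3]
  simp only [pow_succ ((-1) : ℤ⟦X⟧) j]
  push_cast
  linear_combination ((-1:ℤ⟦X⟧))^j * Y^(Tm j + j) * (2*(j:ℤ⟦X⟧)+1) * h1
    + ((-1:ℤ⟦X⟧))^j * Y^(Tm j + j) * (2*(j:ℤ⟦X⟧)+1) * Y^(2*j+d+2) * h2

lemma step_top (n : ℕ) :
    FF (n+1) (n+1) = (1 - Y^(n+1))^2 * FF n (n+1) + (Wc n (n+1) - Wc n (n+2)) := by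
  have hF0 : gb (2*n+1) ((n:ℤ) - ((n+1:ℕ):ℤ)) = 0 := gb_neg _ _ (by push_cast; omega)
  have hg1 : gb (2*(n+1)+1) (((n+1:ℕ):ℤ) - ((n+1:ℕ):ℤ)) = 1 := by
    rw [show (((n+1:ℕ):ℤ) - ((n+1:ℕ):ℤ)) = 0 from by ring, gb_zero]
  have hg2 : gb (2*n+1) ((n:ℤ) + 1 - ((n+1:ℕ):ℤ)) = 1 := by
    rw [show ((n:ℤ) + 1 - ((n+1:ℕ):ℤ)) = 0 from by push_cast; ring, gb_zero]
  rw [FF, FF, Wc, Wc_top, hF0, hg1, hg2]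
  simp only [T, Tm]
  push_cast
  ring

lemma step_all (n j : ℕ) (hj : j ≤ n + 1) :
    FF (n+1) j = (1 - Y^(n+1))^2 * FF n j + (Wc n j - Wc n (j+1)) := by
  rcases Nat.lt_or_ge j (n+1) with h | h
  · exact step n j (by omega)
  · have : j = n + 1 := by omega
    subst this
    exact step_top n

lemma Ssum (n : ℕ) : ∑ j ∈ range (n+1), FF n j = (D n)^2 := by
  induction n with
  | zero =>
    rw [Finset.sum_range_one]
    norm_num [FF, T, Tm, D, gb_zero]
  | succ n ih =>
    rw [Finset.sum_congr rfl (fun j hj => step_all n j (by simp at hj; omega))]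
    rw [Finset.sum_add_distrib, ← Finset.mul_sum, Finset.sum_range_sub' (fun j => Wc n j),
      Wc_zero, Wc_top, Finset.sum_range_succ, ih]
    have hF0 : FF n (n+1) = 0 := by
      rw [FF, gb_neg _ _ (by push_cast; omega)]
      ring
    rw [hF0, D_succ]
    ring

lemma dvd_mul_sub_one {R : Type*} [CommRing R] {d a b : R}
    (ha : d ∣ a - 1) (hb : d ∣ b - 1) : d ∣ a * b - 1 := by
  have : a * b - 1 = a * (b - 1) + (a - 1) := by ring
  rw [this]
  exact dvd_add (Dvd.dvd.mul_left hb a) ha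

lemma dvd_prod_sub_one {d : ℤ⟦X⟧} (s : Finset ℕ) (f : ℕ → ℤ⟦X⟧)
    (h : ∀ i ∈ s, d ∣ f i - 1) : d ∣ (∏ i ∈ s, f i) - 1 := by
  induction s using Finset.cons_induction with
  | empty => simp
  | cons a s ha ih =>
    rw [Finset.prod_cons]
    exact dvd_mul_sub_one (h a (mem_cons_self a s)) (ih fun i hi => h i (mem_cons_of_mem hi))

lemma key_div (n j : ℕ) (hj : j ≤ n) :
    (X:ℤ⟦X⟧)^(9*(n+1-j)) ∣ D n * gb (2*n+1) ((n:ℤ)-j) - 1 := by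
  have harg : (n:ℤ) - j = ((n - j : ℕ) : ℤ) := by push_cast [hj]; ring
  rw [harg]
  have hP := prodP (2*n+1) (n-j) (by omega)
  have hsplit : D n = D (n-j) * ∏ i ∈ Ico (n-j+1) (n+1), (1 - Y ^ i) := by
    rw [D, D, ← Finset.Ico_add_one_right_eq_Icc, ← Finset.Ico_add_one_right_eq_Icc,
      ← Finset.prod_Ico_consecutive _ (by omega : 1 ≤ n-j+1) (by omega : n-j+1 ≤ n+1)]
  rw [hsplit, mul_assoc, mul_comm (∏ i ∈ Ico (n-j+1) (n+1), (1 - Y ^ i)), ← mul_assoc, hP]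
  apply dvd_mul_sub_one
  · apply dvd_prod_sub_one
    intro i hi
    simp only [mem_Icc] at hi
    have : (1 - Y ^ i) - 1 = -(X^(9*i)) := by rw [Y, ← pow_mul]; ring
    rw [this]
    apply Dvd.dvd.neg_right
    exact pow_dvd_pow _ (by omega)
  · apply dvd_prod_sub_one
    intro i hi
    simp only [mem_Ico] at hi
    have : (1 - Y ^ i) - 1 = -(X^(9*i)) := by rw [Y, ← pow_mul]; ring
    rw [this]
    apply Dvd.dvd.neg_right
    exact pow_dvd_pow _ (by omega)

lemma coeff_D_cube (n t : ℕ) (ht : t ≤ n) :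
    coeff (R := ℤ) t (D n ^ 3)
      = ∑ j ∈ range (n+1), (if t = 9 * T j then ((-1:ℤ)^j * (2*(j:ℤ)+1)) else 0) := by
  have h3 : D n ^ 3 = ∑ j ∈ range (n+1), D n * FF n j := by
    rw [← Finset.mul_sum, Ssum]; ring
  rw [h3, map_sum]
  apply Finset.sum_congr rfl
  intro j hj
  simp only [mem_range] at hj
  have hjn : j ≤ n := by omega
  have hc : ((-1 : ℤ⟦X⟧))^j * (2*(j:ℤ⟦X⟧)+1) = C (R := ℤ) ((-1)^j * (2*(j:ℤ)+1)) := by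
    simp [map_mul, map_pow, map_add, map_one, map_neg]
  have hsplit : D n * FF n j
      = C (R := ℤ) ((-1)^j * (2*(j:ℤ)+1)) * X^(9 * T j)
        + C (R := ℤ) ((-1)^j * (2*(j:ℤ)+1)) * X^(9 * T j) * (D n * gb (2*n+1) ((n:ℤ)-j) - 1) := by
    rw [FF, ← hc, Y, ← pow_mul]
    ring
  rw [hsplit, map_add]
  have hz : coeff (R := ℤ) t (C (R := ℤ) ((-1)^j * (2*(j:ℤ)+1)) * X^(9 * T j)
      * (D n * gb (2*n+1) ((n:ℤ)-j) - 1)) = 0 := by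
    have hd : (X:ℤ⟦X⟧)^(9 * T j + 9*(n+1-j)) ∣
        C (R := ℤ) ((-1)^j * (2*(j:ℤ)+1)) * X^(9 * T j) * (D n * gb (2*n+1) ((n:ℤ)-j) - 1) := by
      rw [pow_add]
      exact mul_dvd_mul (Dvd.dvd.mul_left dvd_rfl _) (key_div n j hjn)
    have hlt : t < 9 * T j + 9*(n+1-j) := by
      have := le_T j
      omega
    exact PowerSeries.X_pow_dvd_iff.mp hd t hlt
  rw [hz, add_zero, coeff_C_mul, coeff_X_pow]
  by_cases h : t = 9 * T j <;> simp [h]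

lemma dvd_cube_sub_one {R : Type*} [CommRing R] {d b : R} (hb : d ∣ b - 1) :
    d ∣ b ^ 3 - 1 := by
  have h : b ^ 3 - 1 = (b - 1) * (b^2 + b + 1) := by ring
  rw [h]
  exact Dvd.dvd.mul_right hb _

noncomputable def AP (M : ℕ) : ℤ⟦X⟧ := ∏ k ∈ Icc 1 M, ((1 - X^(3*k)) * (1 - X^k)^3)

lemma AP_sub_one_dvd (m M : ℕ) :
    (X:ℤ⟦X⟧)^(m+1) ∣ (∏ k ∈ Icc (m+1) M, ((1 - X^(3*k)) * (1 - (X:ℤ⟦X⟧)^k)^3)) - 1 := by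
  apply dvd_prod_sub_one
  intro k hk
  simp only [mem_Icc] at hk
  apply dvd_mul_sub_one
  · have h : (1 - X^(3*k)) - 1 = -((X:ℤ⟦X⟧)^(3*k)) := by ring
    rw [h]
    exact Dvd.dvd.neg_right (pow_dvd_pow _ (by omega))
  · apply dvd_cube_sub_one
    have h : (1 - X^k) - 1 = -((X:ℤ⟦X⟧)^k) := by ring
    rw [h]
    exact Dvd.dvd.neg_right (pow_dvd_pow _ (by omega))

lemma constantCoeff_of_dvd {f : ℤ⟦X⟧} {e : ℕ} (he : 1 ≤ e) (h : (X:ℤ⟦X⟧)^e ∣ f - 1) :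
    constantCoeff (R := ℤ) f = 1 := by
  obtain ⟨s, hs⟩ := h
  have : f = 1 + X^e * s := by linear_combination hs
  rw [this]
  simp [map_mul, map_pow, constantCoeff_X, zero_pow (by omega : e ≠ 0)]

lemma constantCoeff_AP (M : ℕ) : constantCoeff (R := ℤ) (AP M) = 1 := by
  have h := AP_sub_one_dvd 0 M
  simpa [AP] using constantCoeff_of_dvd (by omega) h

lemma AP_mul_inv (M : ℕ) : AP M * invOfUnit (AP M) 1 = 1 :=
  PowerSeries.mul_invOfUnit _ 1 (by rw [constantCoeff_AP]; rfl)

lemma inv_unique_ps {f g h : ℤ⟦X⟧} (hg : f * g = 1) (hh : f * h = 1) : g = h := by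
  calc g = g * (f * h) := by rw [hh, mul_one]
    _ = (f * g) * h := by ring
    _ = h := by rw [hg, one_mul]

lemma invA_stable (m M : ℕ) (h : m ≤ M) :
    coeff (R := ℤ) m (invOfUnit (AP M) 1) = coeff (R := ℤ) m (invOfUnit (AP m) 1) := by
  set R : ℤ⟦X⟧ := ∏ k ∈ Icc (m+1) M, ((1 - X^(3*k)) * (1 - X^k)^3) with hR
  have hAP : AP M = AP m * R := by
    rw [AP, AP, hR, ← Finset.Ico_add_one_right_eq_Icc, ← Finset.Ico_add_one_right_eq_Icc, ← Finset.Ico_add_one_right_eq_Icc,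
      ← Finset.prod_Ico_consecutive _ (by omega : 1 ≤ m+1) (by omega : m+1 ≤ M+1)]
  have hRd : (X:ℤ⟦X⟧)^(m+1) ∣ R - 1 := AP_sub_one_dvd m M
  have hcR : constantCoeff (R := ℤ) R = 1 := constantCoeff_of_dvd (by omega) hRd
  have hRinv : R * invOfUnit R 1 = 1 := PowerSeries.mul_invOfUnit _ 1 (by rw [hcR]; rfl)
  have huniq : invOfUnit (AP M) 1 = invOfUnit (AP m) 1 * invOfUnit R 1 := by
    apply inv_unique_ps (f := AP M) (AP_mul_inv M)
    rw [hAP]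
    calc AP m * R * (invOfUnit (AP m) 1 * invOfUnit R 1)
        = (AP m * invOfUnit (AP m) 1) * (R * invOfUnit R 1) := by ring
      _ = 1 := by rw [AP_mul_inv, hRinv, mul_one]
  have hinvRd : (X:ℤ⟦X⟧)^(m+1) ∣ invOfUnit R 1 - 1 := by
    have hkey : invOfUnit R 1 - 1 = invOfUnit R 1 * (1 - R) := by
      have h1 : invOfUnit R 1 * R = 1 := by rw [mul_comm]; exact hRinv
      linear_combination h1
    rw [hkey]
    apply Dvd.dvd.mul_left _ _
    have h2 : (1 : ℤ⟦X⟧) - R = -(R - 1) := by ring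
    rw [h2]
    exact Dvd.dvd.neg_right hRd
  rw [huniq]
  have hdec : invOfUnit (AP m) 1 * invOfUnit R 1
      = invOfUnit (AP m) 1 + invOfUnit (AP m) 1 * (invOfUnit R 1 - 1) := by ring
  rw [hdec, map_add]
  have hz : coeff (R := ℤ) m (invOfUnit (AP m) 1 * (invOfUnit R 1 - 1)) = 0 := by
    apply PowerSeries.X_pow_dvd_iff.mp (Dvd.dvd.mul_left hinvRd _) m (by omega)
  rw [hz, add_zero]

noncomputable def BP (N : ℕ) : ℤ⟦X⟧ := ∏ k ∈ Icc 1 N, (1 - X^(9*k))^3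


lemma BP_eq (N : ℕ) : BP N = D N ^ 3 := by
  rw [BP, D, ← Finset.prod_pow]
  apply Finset.prod_congr rfl
  intro k _
  rw [Y, ← pow_mul]

lemma coeff_BP (N t : ℕ) (ht : t ≤ N) :
    coeff (R := ℤ) t (BP N) = ∑ j ∈ range (N+1), (if t = 9 * T j then ((-1:ℤ)^j * (2*(j:ℤ)+1)) else 0) := by
  rw [BP_eq]
  exact coeff_D_cube N t ht

noncomputable def J (N : ℕ) : ℤ⟦X⟧ :=
  ∑ j ∈ range (N+1), C (R := ℤ) ((-1:ℤ)^j * (2*(j:ℤ)+1)) * X^(9 * T j)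

lemma coeff_J (N t : ℕ) :
    coeff (R := ℤ) t (J N) = ∑ j ∈ range (N+1), (if t = 9 * T j then ((-1:ℤ)^j * (2*(j:ℤ)+1)) else 0) := by
  rw [J, map_sum]
  apply Finset.sum_congr rfl
  intro j _
  rw [coeff_C_mul, coeff_X_pow]
  by_cases h : t = 9 * T j <;> simp [h]

lemma coeff_mul_congr {f g : ℤ⟦X⟧} (h : ℤ⟦X⟧) (N : ℕ)
    (hfg : ∀ t ≤ N, coeff (R := ℤ) t f = coeff (R := ℤ) t g) :
    coeff (R := ℤ) N (f * h) = coeff (R := ℤ) N (g * h) := by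
  rw [coeff_mul, coeff_mul]
  apply Finset.sum_congr rfl
  intro p hp
  rw [Finset.HasAntidiagonal.mem_antidiagonal] at hp
  rw [hfg p.1 (by omega)]

lemma coeff_X_pow_mul' (φ : ℤ⟦X⟧) (e t : ℕ) :
    coeff (R := ℤ) t (X^e * φ) = if e ≤ t then coeff (R := ℤ) (t - e) φ else 0 := by
  split_ifs with h
  · have h2 : t = (t - e) + e := by omega
    conv_lhs => rw [h2]
    rw [coeff_X_pow_mul]
  · exact PowerSeries.X_pow_dvd_iff.mp (Dvd.dvd.mul_right dvd_rfl φ) t (by omega)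

lemma cphi_eq (n : ℕ) : cphi3' (45*n+22)
    = 9 * ∑ j ∈ range (45*n+23), ((-1:ℤ)^j * (2*(j:ℤ)+1)) *
        (if 9 * T j ≤ 45*n+21 then a (45*n+21 - 9*T j) else 0) := by
  have h9 : (9 : ℤ⟦X⟧) = C (R := ℤ) 9 := by
    exact_mod_cast (map_ofNat (C (R := ℤ)) 9).symm
  set N := 45*n+22 with hN
  set inv : ℤ⟦X⟧ := invOfUnit (AP N) 1 with hinv
  have hre : (9 : ℤ⟦X⟧) * X * BP N * inv = C (R := ℤ) 9 * (X * (BP N * inv)) := by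
    rw [h9]; ring
  have h1 : cphi3' N = 9 * coeff (R := ℤ) N (X * (BP N * inv)) := by
    rw [cphi3']
    show coeff (R := ℤ) N ((9 : ℤ⟦X⟧) * X * BP N * inv) = _
    rw [hre, coeff_C_mul]
  rw [h1]
  have hN1 : N = (45*n+21) + 1 := by omega
  rw [hN1, coeff_succ_X_mul]
  have h2 : coeff (R := ℤ) (45*n+21) (BP N * inv) = coeff (R := ℤ) (45*n+21) (J N * inv) := by
    apply coeff_mul_congr
    intro t ht
    rw [coeff_BP N t (by omega), coeff_J]
  rw [h2, J, Finset.sum_mul, map_sum]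
  congr 1
  apply Finset.sum_congr rfl
  intro j _
  rw [mul_assoc, coeff_C_mul, coeff_X_pow_mul']
  congr 1
  split_ifs with h
  · rw [hinv, invA_stable (45*n+21 - 9*T j) N (by omega)]
    rfl
  · rfl

lemma term_dvd (ha6 : ∀ n : ℕ, a (15 * n + 6) ≡ 0 [ZMOD 5])
    (ha12 : ∀ n : ℕ, a (15 * n + 12) ≡ 0 [ZMOD 5]) (n j : ℕ) :
    (5:ℤ) ∣ ((-1:ℤ)^j * (2*(j:ℤ)+1)) *
      (if 9 * T j ≤ 45*n+21 then a (45*n+21 - 9*T j) else 0) := by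
  by_cases hif : 9 * T j ≤ 45*n+21
  swap
  · simp [hif]
  rw [if_pos hif]
  have h2T : 2 * T j = j * (j + 1) := two_T j
  have hr : j % 5 = 0 ∨ j % 5 = 1 ∨ j % 5 = 2 ∨ j % 5 = 3 ∨ j % 5 = 4 := by omega
  set q := j / 5 with hq
  have hjq : j = 5 * q + j % 5 := by omega
  have key6 : (2 * T j) % 10 = 0 ∨ (2 * T j) % 10 = 2 → True := fun _ => trivial
  rcases hr with h | h | h | h | h
  · -- r = 0 : T ≡ 0 mod 5, index ≡ 6 mod 15
    obtain ⟨s, hs⟩ : ∃ s, 2 * T j = 5 * s := ⟨5*q*q + q, by rw [h2T]; nth_rewrite 1 [hjq]; nth_rewrite 2 [hjq]; rw [h]; ring⟩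
    obtain ⟨k, hk⟩ : ∃ k, 45*n+21 - 9*T j = 15*k+6 :=
      ⟨(45*n+21 - 9*T j - 6)/15, by omega⟩
    rw [hk]
    exact Dvd.dvd.mul_left ((Int.modEq_zero_iff_dvd).mp (ha6 k)) _
  · -- r = 1 : T ≡ 1 mod 5, index ≡ 12 mod 15
    obtain ⟨s, hs⟩ : ∃ s, 2 * T j = 5 * s + 2 := ⟨5*q*q + 3*q, by rw [h2T]; nth_rewrite 1 [hjq]; nth_rewrite 2 [hjq]; rw [h]; ring⟩
    obtain ⟨k, hk⟩ : ∃ k, 45*n+21 - 9*T j = 15*k+12 :=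
      ⟨(45*n+21 - 9*T j - 12)/15, by omega⟩
    rw [hk]
    exact Dvd.dvd.mul_left ((Int.modEq_zero_iff_dvd).mp (ha12 k)) _
  · -- r = 2 : 5 ∣ 2j+1
    have hdvd : (5:ℤ) ∣ (2*(j:ℤ)+1) := by
      refine ⟨2*q+1, ?_⟩
      have : (j:ℤ) = 5*q + 2 := by exact_mod_cast congrArg (Nat.cast : ℕ → ℤ) (by omega : j = 5*q+2)
      rw [this]; ring
    exact Dvd.dvd.mul_right (Dvd.dvd.mul_left hdvd _) _
  · -- r = 3 : T ≡ 1 mod 5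
    obtain ⟨s, hs⟩ : ∃ s, 2 * T j = 5 * s + 2 := ⟨5*q*q + 7*q + 2, by rw [h2T]; nth_rewrite 1 [hjq]; nth_rewrite 2 [hjq]; rw [h]; ring⟩
    obtain ⟨k, hk⟩ : ∃ k, 45*n+21 - 9*T j = 15*k+12 :=
      ⟨(45*n+21 - 9*T j - 12)/15, by omega⟩
    rw [hk]
    exact Dvd.dvd.mul_left ((Int.modEq_zero_iff_dvd).mp (ha12 k)) _
  · -- r = 4 : T ≡ 0 mod 5
    obtain ⟨s, hs⟩ : ∃ s, 2 * T j = 5 * s := ⟨5*q*q + 9*q + 4, by rw [h2T]; nth_rewrite 1 [hjq]; nth_rewrite 2 [hjq]; rw [h]; ring⟩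
    obtain ⟨k, hk⟩ : ∃ k, 45*n+21 - 9*T j = 15*k+6 :=
      ⟨(45*n+21 - 9*T j - 6)/15, by omega⟩
    rw [hk]
    exact Dvd.dvd.mul_left ((Int.modEq_zero_iff_dvd).mp (ha6 k)) _


theorem cphi3'_cong_22
    (ha6 : ∀ n : ℕ, a (15 * n + 6) ≡ 0 [ZMOD 5])
    (ha12 : ∀ n : ℕ, a (15 * n + 12) ≡ 0 [ZMOD 5]) :
    ∀ n : ℕ, cphi3' (45 * n + 22) ≡ 0 [ZMOD 5] := by
  intro n
  rw [Int.modEq_zero_iff_dvd, cphi_eq n]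
  exact Dvd.dvd.mul_left (Finset.dvd_sum fun j _ => term_dvd ha6 ha12 n j) 9
end

section
/- Define cφ3'(n) by ∑_{n≥0} cφ3'(n) q^n = 9 q ∏_{n≥1} (1-q^{9n})^3 / ((1-q^{3n})(1-q^n)^3). Assuming a(15n+6) ≡ 0 (mod 5) and a(15n+12) ≡ 0 (mod 5) for all n ≥ 0 (where ∑ a(n) q^n = ∏_{n≥1}(1-q^{3n})^{-1}(1-q^n)^{-3}), one has cφ3'(45n+37) ≡ 0 (mod 5) for all n ≥ 0. -/
open PowerSeries Finset

namespace Jac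

/-- triangular numbers -/
def t : ℕ → ℕ
  | 0 => 0
  | a+1 => t a + a + 1

/-- `tau r n = T (r - n)` where `T k = k(k+1)/2` extended to negative `k`. -/
def tau (r n : ℕ) : ℕ := if n ≤ r then t (r - n) else t (n - r - 1)

lemma le_t_succ (a : ℕ) : a ≤ t a + 1 := by
  induction a with
  | zero => simp [t]
  | succ a ih => simp [t]; omega

variable {R : Type*} [CommRing R]

/-- Gaussian binomial `B x m r = [m choose r]_x` via the q-Pascal recurrence. -/
def B (x : R) : ℕ → ℕ → R
  | 0, 0 => 1
  | 0, _+1 => 0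
  | m+1, 0 => 1
  | m+1, r+1 => B x m r + x^(r+1) * B x m (r+1)

lemma B_zero (x : R) (m : ℕ) : B x m 0 = 1 := by cases m <;> rfl

lemma B_succ (x : R) (m r : ℕ) : B x (m+1) (r+1) = B x m r + x^(r+1) * B x m (r+1) := rfl

lemma B_eq_zero (x : R) : ∀ m r, m < r → B x m r = 0 := by
  intro m
  induction m with
  | zero => intro r hr; match r, hr with | (s+1), _ => rfl
  | succ m ih =>
    intro r hr
    match r, hr with
    | (s+1), hr =>
      rw [B_succ, ih s (by omega), ih (s+1) (by omega)]
      ring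

lemma B_diag (x : R) (m : ℕ) : B x m m = 1 := by
  induction m with
  | zero => rfl
  | succ m ih => rw [B_succ, ih, B_eq_zero x m (m+1) (by omega)]; ring

lemma B_one_rel (x : R) (m : ℕ) : 1 + x * B x m 1 = x ^ m + B x m 1 := by
  induction m with
  | zero => show 1 + x * 0 = x ^ 0 + 0; ring
  | succ m ih =>
    have h : B x (m+1) 1 = 1 + x * B x m 1 := by
      rw [B_succ, B_zero]; ring
    rw [h]
    have := congrArg (x * ·) ih
    have h2 : x * (1 + x * B x m 1) = x * (x ^ m + B x m 1) := by rw [ih]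
    calc 1 + x * (1 + x * B x m 1) = 1 + x * (x^m + B x m 1) := by rw [h2]
      _ = x ^ (m+1) + (1 + x * B x m 1) := by ring

lemma pascal2 (x : R) : ∀ m r, r ≤ m → B x (m+1) (r+1) = x^(m-r) * B x m r + B x m (r+1) := by
  intro m
  induction m with
  | zero =>
    intro r hr
    interval_cases r
    show B x 1 1 = x ^ 0 * B x 0 0 + B x 0 1
    rw [B_succ, B_zero]
    show (1:R) + x^1 * 0 = x^0 * 1 + 0
    ring
  | succ m ih =>
    intro r hr
    match r with
    | 0 =>
      have h0 : B x (m+2) 1 = 1 + x * B x (m+1) 1 := by rw [B_succ, B_zero]; ring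
      rw [h0, B_zero, B_one_rel x (m+1)]
      norm_num
    | s+1 =>
      have hs : s ≤ m := by omega
      by_cases hsm : s = m
      · subst hsm
        simp [B_succ, B_diag, B_eq_zero x (s+1) (s+2) (by omega),
          B_eq_zero x s (s+1) (by omega), B_eq_zero x s (s+2) (by omega)]
      · have hsm' : s + 1 ≤ m := by omega
        have d1 : B x (m+2) (s+2) = B x (m+1) (s+1) + x^(s+2) * B x (m+1) (s+2) := B_succ ..
        have i1 : B x (m+1) (s+1) = x^(m-s) * B x m s + B x m (s+1) := ih s hs
        have i2 : B x (m+1) (s+2) = x^(m-(s+1)) * B x m (s+1) + B x m (s+2) := ih (s+1) hsm'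
        have r1 : B x (m+1) (s+1) = B x m s + x^(s+1) * B x m (s+1) := B_succ ..
        have r2 : B x (m+1) (s+2) = B x m (s+1) + x^(s+2) * B x m (s+2) := B_succ ..
        have pe : x^(m-s) = x * x^(m-(s+1)) := by
          rw [← pow_succ']; congr 1; omega
        have goal_exp : m + 1 - (s+1) = m - s := by omega
        rw [goal_exp]
        linear_combination d1 + i1 - x^(m-s) * r1 + x^(s+2) * i2 - r2 - x^(s+1) * B x m (s+1) * pe

/-- `P x n = ∏_{k=1}^n (1 - x^k)`. -/
def P (x : R) (n : ℕ) : R := ∏ k ∈ Icc 1 n, (1 - x^k)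

lemma P_succ (x : R) (n : ℕ) : P x (n+1) = P x n * (1 - x^(n+1)) := by
  unfold P
  rw [← Finset.prod_Icc_succ_top (by omega : 1 ≤ n+1)]

lemma poch (x : R) : ∀ m r, r ≤ m → B x m r * P x r = ∏ i ∈ Icc (m-r+1) m, (1 - x^i) := by
  intro m
  induction m with
  | zero =>
    intro r hr
    interval_cases r
    simp [B, P]
  | succ m ih =>
    intro r hr
    match r with
    | 0 => simp [B_zero, P]
    | s+1 =>
      by_cases hsm : s = m
      · subst hsm
        rw [B_diag, one_mul]
        have : s + 1 - (s+1) + 1 = 1 := by omega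
        rw [this]
        rfl
      · have hs1 : s + 1 ≤ m := by omega
        have hB : B x (m+1) (s+1) = B x m s + x^(s+1) * B x m (s+1) := B_succ ..
        have hP : P x (s+1) = P x s * (1 - x^(s+1)) := P_succ ..
        have h1 : B x m s * P x s = ∏ i ∈ Icc (m-s+1) m, (1 - x^i) := ih s (by omega)
        have h2' : B x m (s+1) * (P x s * (1 - x^(s+1))) = ∏ i ∈ Icc (m-(s+1)+1) m, (1 - x^i) := by
          rw [← hP]; exact ih (s+1) hs1
        have hQ2 : (∏ i ∈ Icc (m-(s+1)+1) m, (1 - x^i)) = (1 - x^(m-s)) * ∏ i ∈ Icc (m-s+1) m, (1 - x^i) := by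
          have h1' : m - (s+1) + 1 = m - s := by omega
          rw [h1']
          have : Icc (m-s) m = insert (m-s) (Icc (m-s+1) m) := by
            ext i
            simp only [Finset.mem_Icc, Finset.mem_insert]
            omega
          rw [this, Finset.prod_insert (by simp)]
        have hT : (∏ i ∈ Icc (m+1-(s+1)+1) (m+1), (1 - x^i)) = (∏ i ∈ Icc (m-s+1) m, (1 - x^i)) * (1 - x^(m+1)) := by
          have h1' : m + 1 - (s+1) + 1 = m - s + 1 := by omega
          rw [h1', ← Finset.prod_Icc_succ_top (by omega : m - s + 1 ≤ m + 1)]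
        have pe : x^(s+1) * x^(m-s) = x^(m+1) := by
          rw [← pow_add]; congr 1; omega
        rw [hT, hB, hP]
        linear_combination (1-x^(s+1))*h1 + x^(s+1)*h2' + x^(s+1)*hQ2 - (∏ i ∈ Icc (m-s+1) m, (1 - x^i)) * pe

lemma t_succ (a : ℕ) : t (a+1) = t a + a + 1 := rfl

lemma tau_ge (r n : ℕ) (h : n ≤ r) : tau r n = t (r - n) := if_pos h
lemma tau_lt (r n : ℕ) (h : r < n) : tau r n = t (n - r - 1) := if_neg (by omega)

lemma tau_0 (n : ℕ) : tau 0 (n+1) = n + tau 0 n := by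
  rcases Nat.eq_zero_or_pos n with h | h
  · subst h; rfl
  · rw [tau_lt 0 (n+1) (by omega), tau_lt 0 n (by omega)]
    have e : n + 1 - 0 - 1 = (n - 0 - 1) + 1 := by omega
    rw [e, t_succ]
    omega

lemma tau_1 (n : ℕ) : n + tau 1 n = 1 + tau 1 (n+1) := by
  rcases Nat.lt_or_ge n 2 with h | h
  · interval_cases n <;> rfl
  · rw [tau_lt 1 n (by omega), tau_lt 1 (n+1) (by omega)]
    have e : n + 1 - 1 - 1 = (n - 1 - 1) + 1 := by omega
    rw [e, t_succ]
    omega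

lemma tau_b (s n : ℕ) : tau (s+2) (n+1) = tau (s+1) n := by
  unfold tau
  rcases Nat.lt_or_ge (s+1) n with h | h
  · rw [if_neg (by omega), if_neg (by omega)]
    congr 1
    omega
  · rw [if_pos (by omega), if_pos (by omega)]
    congr 1
    omega

lemma tau_a (s n : ℕ) (h : s ≤ 2*n) : tau (s+2) (n+1) + (2*n-s) = (n+1) + tau s n := by
  rcases Nat.lt_or_ge s n with hc | hc
  · rcases Nat.lt_or_ge (s+1) n with hlt | hge
    · -- s ≤ n - 2
      rw [tau_lt (s+2) (n+1) (by omega), tau_lt s n (by omega)]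
      have e : n - s - 1 = (n + 1 - (s+2) - 1) + 1 := by omega
      rw [e, t_succ]
      omega
    · -- s = n - 1
      have hs : s + 1 = n := by omega
      rw [tau_lt s n (by omega), tau_ge (s+2) (n+1) (by omega)]
      have e1 : s + 2 - (n+1) = 0 := by omega
      have e2 : n - s - 1 = 0 := by omega
      rw [e1, e2]
      show t 0 + (2*n - s) = n + 1 + t 0
      simp only [t]
      omega
  · rw [tau_ge (s+2) (n+1) (by omega), tau_ge s n hc]
    have e : s + 2 - (n+1) = (s - n) + 1 := by omega
    rw [e, t_succ]
    omega

lemma tau_c (s n : ℕ) : tau (s+2) (n+1) + (s+2) = n + tau (s+2) n := by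
  rcases Nat.lt_or_ge (s+2) n with hc | hc
  · rw [tau_lt (s+2) (n+1) (by omega), tau_lt (s+2) n (by omega)]
    have e : n + 1 - (s+2) - 1 = (n - (s+2) - 1) + 1 := by omega
    rw [e, t_succ]
    omega
  · rcases Nat.lt_or_ge (s+2) (n+1) with hc2 | hc2
    · -- s + 2 = n
      rw [tau_lt (s+2) (n+1) hc2, tau_ge (s+2) n hc]
      have e1 : n + 1 - (s+2) - 1 = 0 := by omega
      have e2 : s + 2 - n = 0 := by omega
      rw [e1, e2]
      show t 0 + (s+2) = n + t 0
      simp only [t]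
      omega
    · rw [tau_ge (s+2) (n+1) hc2, tau_ge (s+2) n (by omega)]
      have e : s + 2 - n = (s + 2 - (n+1)) + 1 := by omega
      rw [e, t_succ]
      omega

/-- summand of the Jacobi sum -/
def c (x : R) (n s : ℕ) : R := (-1)^(s+n) * B x (2*n) s * x^(tau s n)

lemma c_eq_zero (x : R) (n s : ℕ) (h : 2*n < s) : c x n s = 0 := by
  unfold c
  rw [B_eq_zero x (2*n) s h]
  ring

def E (x : R) (n : ℕ) : R := ∑ r ∈ range (2*n+1), c x n r

def D (x : R) (n : ℕ) : R := ∑ r ∈ range (2*n+1), (r : R) * c x n r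

lemma E_ext (x : R) (n N : ℕ) (h : 2*n+1 ≤ N) : ∑ r ∈ range N, c x n r = E x n := by
  unfold E
  rw [← Finset.sum_subset (Finset.range_subset_range.2 h)]
  intro r _ hr
  exact c_eq_zero x n r (by simp at hr ⊢; omega)

lemma D_ext (x : R) (n N : ℕ) (h : 2*n+1 ≤ N) : ∑ r ∈ range N, (r:R) * c x n r = D x n := by
  unfold D
  rw [← Finset.sum_subset (Finset.range_subset_range.2 h)]
  intro r _ hr
  rw [c_eq_zero x n r (by simp at hr ⊢; omega)]
  ring

lemma double_pascal (x : R) (n s : ℕ) (h : s ≤ 2*n) :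
    B x (2*n+2) (s+2) = x^(2*n-s) * B x (2*n) s + (1+x^(2*n+1)) * B x (2*n) (s+1)
      + x^(s+2) * B x (2*n) (s+2) := by
  rcases Nat.eq_or_lt_of_le h with he | hlt
  · -- s = 2n
    subst he
    rw [B_diag, B_diag, B_eq_zero x (2*n) (2*n+1) (by omega),
      B_eq_zero x (2*n) (2*n+2) (by omega), Nat.sub_self]
    simp
  · have p1 : B x (2*n+2) (s+2) = B x (2*n+1) (s+1) + x^(s+2) * B x (2*n+1) (s+2) := B_succ ..
    have p2 : B x (2*n+1) (s+1) = x^(2*n-s) * B x (2*n) s + B x (2*n) (s+1) := pascal2 x (2*n) s h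
    have p3 : B x (2*n+1) (s+2) = x^(2*n-(s+1)) * B x (2*n) (s+1) + B x (2*n) (s+2) :=
      pascal2 x (2*n) (s+1) (by omega)
    have pe : x^(s+2) * x^(2*n-(s+1)) = x^(2*n+1) := by
      rw [← pow_add]; congr 1; omega
    rw [p1, p2, p3]
    linear_combination B x (2*n) (s+1) * pe

lemma tau_0b (n : ℕ) : tau 0 n = tau 1 (n+1) := by
  rcases Nat.eq_zero_or_pos n with h | h
  · subst h; rfl
  · rw [tau_lt 0 n (by omega), tau_lt 1 (n+1) (by omega)]
    exact congrArg t (by omega)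

lemma key (x : R) (n : ℕ) (r : ℕ) (hr : r ≤ 2*n+2) :
    c x (n+1) r = -(x^n) * c x n r + (1+x^(2*n+1)) * (if 1 ≤ r then c x n (r-1) else 0)
      - x^(n+1) * (if 2 ≤ r then c x n (r-2) else 0) := by
  match r with
  | 0 =>
    rw [if_neg (by omega), if_neg (by omega)]
    unfold c
    rw [show 2*(n+1) = 2*n+2 by omega, B_zero, B_zero]
    have e : x^(tau 0 (n+1)) = x^n * x^(tau 0 n) := by
      rw [← pow_add, tau_0]
    have sg : (-1:R)^(0+(n+1)) = -(-1:R)^(0+n) := by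
      rw [show 0+(n+1) = (0+n)+1 by omega, pow_add]; ring
    rw [e, sg]
    ring
  | 1 =>
    rw [if_pos (by omega), if_neg (by omega)]
    unfold c
    rw [show 2*(n+1) = 2*n+2 by omega, show (1:ℕ)-1 = 0 from rfl, B_zero]
    have hB : B x (2*n+2) 1 = 1 + x^(2*n+1) + x * B x (2*n) 1 := by
      have h1 : B x (2*n+2) 1 = B x (2*n+1) 0 + x^1 * B x (2*n+1) 1 := B_succ ..
      have h2 : B x (2*n+1) 1 = x^(2*n-0) * B x (2*n) 0 + B x (2*n) 1 := pascal2 x (2*n) 0 (by omega)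
      rw [Nat.sub_zero] at h2
      rw [h1, h2, B_zero, B_zero]
      ring
    have e1 : x^n * x^(tau 1 n) = x^1 * x^(tau 1 (n+1)) := by
      rw [← pow_add, ← pow_add]; congr 1; exact tau_1 n
    have e2 : x^(tau 0 n) = x^(tau 1 (n+1)) := by rw [tau_0b]
    have sg1 : (-1:R)^(1+(n+1)) = (-1:R)^(0+n) := by
      rw [show 1+(n+1) = (0+n)+2 by omega, pow_add]; ring
    have sg2 : (-1:R)^(1+n) = -(-1:R)^(0+n) := by
      rw [show 1+n = (0+n)+1 by omega, pow_add]; ring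
    rw [hB, sg1, sg2]
    linear_combination (-(-1:R)^(0+n) * B x (2*n) 1) * e1 + (-(-1:R)^(0+n) * (1+x^(2*n+1))) * e2
  | (s+2) =>
    rw [if_pos (by omega), if_pos (by omega)]
    unfold c
    rw [show 2*(n+1) = 2*n+2 by omega, double_pascal x n s (by omega),
      show s+2-1 = s+1 from rfl, show s+2-2 = s from rfl]
    have ea : x^(tau (s+2) (n+1)) * x^(2*n-s) = x^(n+1) * x^(tau s n) := by
      have h := tau_a s n (by omega)
      rw [← pow_add, ← pow_add]
      exact congrArg (x ^ ·) (by omega)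
    have eb : x^(tau (s+2) (n+1)) = x^(tau (s+1) n) := by rw [tau_b]
    have ec : x^(tau (s+2) (n+1)) * x^(s+2) = x^n * x^(tau (s+2) n) := by
      have h := tau_c s n
      rw [← pow_add, ← pow_add]
      exact congrArg (x ^ ·) (by omega)
    have sg1 : (-1:R)^(s+2+(n+1)) = -(-1:R)^(s+n) := by
      rw [show s+2+(n+1) = (s+n)+3 by omega, pow_add]; ring
    have sg2 : (-1:R)^(s+1+n) = -(-1:R)^(s+n) := by
      rw [show s+1+n = (s+n)+1 by omega, pow_add]; ring
    have sg3 : (-1:R)^(s+2+n) = (-1:R)^(s+n) := by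
      rw [show s+2+n = (s+n)+2 by omega, pow_add]; ring
    rw [sg1, sg2, sg3]
    linear_combination (-(-1:R)^(s+n) * B x (2*n) s) * ea
      + (-(-1:R)^(s+n) * ((1+x^(2*n+1)) * B x (2*n) (s+1))) * eb
      + (-(-1:R)^(s+n) * B x (2*n) (s+2)) * ec

lemma sum_shift1 (N : ℕ) (g : ℕ → R) :
    ∑ r ∈ range (N+1), (if 1 ≤ r then g (r-1) else 0) = ∑ r ∈ range N, g r := by
  rw [Finset.sum_range_succ']
  simp

lemma sum_shift2 (N : ℕ) (g : ℕ → R) :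
    ∑ r ∈ range (N+2), (if 2 ≤ r then g (r-2) else 0) = ∑ r ∈ range N, g r := by
  rw [Finset.sum_range_succ']
  have h : ∀ i, (if 2 ≤ i+1 then g (i+1-2) else 0) = (if 1 ≤ i then g (i-1) else 0) := by
    intro i
    rcases Nat.eq_zero_or_pos i with h | h
    · subst h; simp
    · rw [if_pos (by omega), if_pos (by omega)]
      exact congrArg g (by omega)
  rw [Finset.sum_congr rfl (fun i _ => h i)]
  simp [sum_shift1]

lemma sum_shift1' (N : ℕ) (g : ℕ → R) :
    ∑ r ∈ range (N+1), (r:R) * (if 1 ≤ r then g (r-1) else 0)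
      = ∑ r ∈ range N, ((r:R)+1) * g r := by
  rw [Finset.sum_range_succ']
  have h : ∀ i, ((i+1 : ℕ):R) * (if 1 ≤ i+1 then g (i+1-1) else 0) = ((i:R)+1) * g i := by
    intro i
    rw [if_pos (by omega)]
    push_cast
    norm_num
  rw [Finset.sum_congr rfl (fun i _ => h i)]
  simp

lemma sum_shift2' (N : ℕ) (g : ℕ → R) :
    ∑ r ∈ range (N+2), (r:R) * (if 2 ≤ r then g (r-2) else 0)
      = ∑ r ∈ range N, ((r:R)+2) * g r := by
  rw [Finset.sum_range_succ']
  have h : ∀ i, ((i+1 : ℕ):R) * (if 2 ≤ i+1 then g (i+1-2) else 0)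
      = ((i:R)+1) * (if 1 ≤ i then g (i-1) else 0) := by
    intro i
    rcases Nat.eq_zero_or_pos i with h | h
    · subst h; simp
    · rw [if_pos (by omega), if_pos (by omega)]
      push_cast
      norm_num
  rw [Finset.sum_congr rfl (fun i _ => h i)]
  have z : ((0:ℕ):R) * (if 2 ≤ 0 then g (0-2) else 0) = 0 := by simp
  rw [z, add_zero, Finset.sum_range_succ']
  have h2 : ∀ i, (((i+1:ℕ):R)+1) * (if 1 ≤ i+1 then g (i+1-1) else 0) = ((i:R)+2) * g i := by
    intro i
    rw [if_pos (by omega)]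
    push_cast
    ring_nf
  rw [Finset.sum_congr rfl (fun i _ => h2 i)]
  simp

theorem ED (x : R) : ∀ n, 1 ≤ n → E x n = 0 ∧ D x n = P x n * P x (n-1) := by
  intro n
  induction n with
  | zero => omega
  | succ n ih =>
    intro _
    rcases Nat.eq_zero_or_pos n with h0 | h0
    · subst h0
      constructor
      · show E x 1 = 0
        norm_num [E, c, B, tau, t, Finset.sum_range_succ]
      · show D x 1 = P x 1 * P x 0
        norm_num [D, c, B, tau, t, P, Finset.sum_range_succ]
        ring
    · obtain ⟨hE, hD⟩ := ih h0
      have hkey : ∀ r ∈ range (2*n+3), c x (n+1) r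
          = -(x^n) * c x n r + (1+x^(2*n+1)) * (if 1 ≤ r then c x n (r-1) else 0)
            - x^(n+1) * (if 2 ≤ r then c x n (r-2) else 0) := by
        intro r hr
        exact key x n r (by simp at hr; omega)
      have hS0 : ∑ r ∈ range (2*n+3), -(x^n) * c x n r = -(x^n) * E x n := by
        rw [← Finset.mul_sum, E_ext x n _ (by omega)]
      have hS1 : ∑ r ∈ range (2*n+3), (1+x^(2*n+1)) * (if 1 ≤ r then c x n (r-1) else 0)
          = (1+x^(2*n+1)) * E x n := by
        rw [← Finset.mul_sum, show 2*n+3 = (2*n+2)+1 from rfl, sum_shift1,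
          E_ext x n _ (by omega)]
      have hS2 : ∑ r ∈ range (2*n+3), x^(n+1) * (if 2 ≤ r then c x n (r-2) else 0)
          = x^(n+1) * E x n := by
        rw [← Finset.mul_sum, show 2*n+3 = (2*n+1)+2 from rfl, sum_shift2,
          E_ext x n _ (by omega)]
      have hEn : E x (n+1) = 0 := by
        unfold E
        rw [show 2*(n+1)+1 = 2*n+3 by omega, Finset.sum_congr rfl hkey,
          Finset.sum_sub_distrib, Finset.sum_add_distrib, hS0, hS1, hS2, hE]
        ring
      refine ⟨hEn, ?_⟩
      have hT0 : ∑ r ∈ range (2*n+3), (r:R) * (-(x^n) * c x n r) = -(x^n) * D x n := by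
        have : ∀ r : ℕ, (r:R) * (-(x^n) * c x n r) = -(x^n) * ((r:R) * c x n r) := by
          intro r; ring
        rw [Finset.sum_congr rfl (fun r _ => this r), ← Finset.mul_sum, D_ext x n _ (by omega)]
      have hT1 : ∑ r ∈ range (2*n+3), (r:R) * ((1+x^(2*n+1)) * (if 1 ≤ r then c x n (r-1) else 0))
          = (1+x^(2*n+1)) * (D x n + E x n) := by
        have : ∀ r : ℕ, (r:R) * ((1+x^(2*n+1)) * (if 1 ≤ r then c x n (r-1) else 0))
            = (1+x^(2*n+1)) * ((r:R) * (if 1 ≤ r then c x n (r-1) else 0)) := by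
          intro r; ring
        rw [Finset.sum_congr rfl (fun r _ => this r), ← Finset.mul_sum,
          show 2*n+3 = (2*n+2)+1 from rfl, sum_shift1']
        congr 1
        have : ∀ r : ℕ, ((r:R)+1) * c x n r = (r:R) * c x n r + c x n r := by intro r; ring
        rw [Finset.sum_congr rfl (fun r _ => this r), Finset.sum_add_distrib,
          D_ext x n _ (by omega), E_ext x n _ (by omega)]
      have hT2 : ∑ r ∈ range (2*n+3), (r:R) * (x^(n+1) * (if 2 ≤ r then c x n (r-2) else 0))
          = x^(n+1) * (D x n + 2 * E x n) := by
        have : ∀ r : ℕ, (r:R) * (x^(n+1) * (if 2 ≤ r then c x n (r-2) else 0))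
            = x^(n+1) * ((r:R) * (if 2 ≤ r then c x n (r-2) else 0)) := by
          intro r; ring
        rw [Finset.sum_congr rfl (fun r _ => this r), ← Finset.mul_sum,
          show 2*n+3 = (2*n+1)+2 from rfl, sum_shift2']
        congr 1
        have : ∀ r : ℕ, ((r:R)+2) * c x n r = (r:R) * c x n r + 2 * c x n r := by intro r; ring
        rw [Finset.sum_congr rfl (fun r _ => this r), Finset.sum_add_distrib,
          D_ext x n _ (by omega), ← Finset.mul_sum, E_ext x n _ (by omega)]
      have hDkey : ∀ r ∈ range (2*n+3), (r:R) * c x (n+1) r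
          = (r:R) * (-(x^n) * c x n r) + (r:R) * ((1+x^(2*n+1)) * (if 1 ≤ r then c x n (r-1) else 0))
            - (r:R) * (x^(n+1) * (if 2 ≤ r then c x n (r-2) else 0)) := by
        intro r hr
        rw [hkey r hr]
        ring
      have hP2 : P x n = P x (n-1) * (1-x^n) := by
        have h := P_succ x (n-1)
        rwa [show n-1+1 = n by omega] at h
      unfold D
      rw [show 2*(n+1)+1 = 2*n+3 by omega, Finset.sum_congr rfl hDkey,
        Finset.sum_sub_distrib, Finset.sum_add_distrib, hT0, hT1, hT2, hE, hD,
        show n+1-1 = n from rfl, P_succ]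
      linear_combination (-(1 - x^(n+1)) * P x n) * hP2

theorem P_cubed (x : R) (M : ℕ) (hM : 1 ≤ M) :
    P x M ^ 3 = ∑ r ∈ range (2*M+1), (r:R) * ((1 - x^M) * P x M * c x M r) := by
  have hD := (ED x M hM).2
  have hP : P x M = P x (M-1) * (1-x^M) := by
    have h := P_succ x (M-1)
    rwa [show M-1+1 = M by omega] at h
  have h3 : P x M ^ 3 = (1-x^M) * P x M * D x M := by
    rw [hD]
    linear_combination (P x M ^ 2) * hP
  rw [h3]
  unfold D
  rw [Finset.mul_sum]
  exact Finset.sum_congr rfl fun r _ => by ring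

lemma t_ge (a : ℕ) : a ≤ t a := by
  induction a with
  | zero => simp [t]
  | succ a ih => rw [t_succ]; omega

lemma t_strictMono : StrictMono t := by
  apply strictMono_nat_of_lt_succ
  intro n
  rw [t_succ]
  omega

lemma two_t (k : ℕ) : 2 * t k = k * (k+1) := by
  induction k with
  | zero => rfl
  | succ k ih => rw [t_succ]; ring_nf; ring_nf at ih; omega

lemma t_mod5 (k : ℕ) (h : k % 5 ≠ 2) : t k % 5 = 0 ∨ t k % 5 = 1 := by
  have h2 := two_t k
  have e : k = 5*(k/5) + k%5 := (Nat.div_add_mod k 5).symm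
  have hrem : k % 5 < 5 := Nat.mod_lt _ (by norm_num)
  set q := k/5 with hq
  rcases (by omega : k % 5 = 0 ∨ k % 5 = 1 ∨ k % 5 = 3 ∨ k % 5 = 4) with h0 | h0 | h0 | h0 <;>
    rw [h0] at e <;>
    [ (have e2 : k*(k+1) = 25*(q*q) + 5*q + 0 := by rw [e]; ring);
      (have e2 : k*(k+1) = 25*(q*q) + 15*q + 2 := by rw [e]; ring);
      (have e2 : k*(k+1) = 25*(q*q) + 35*q + 12 := by rw [e]; ring);
      (have e2 : k*(k+1) = 25*(q*q) + 45*q + 20 := by rw [e]; ring)] <;>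
    omega

lemma bound_min (r M : ℕ) (hr : r ≤ 2*M) : M ≤ tau r M + min r (2*M-r) + 1 := by
  rcases Nat.lt_or_ge r M with h | h
  · rw [tau_lt r M h]
    have := t_ge (M - r - 1)
    omega
  · rw [tau_ge r M h]
    have := t_ge (r - M)
    omega

end Jac

section PS

/-- product of series ≡ 1 mod X^d is ≡ 1 mod X^d -/
lemma prod_one_mod (s : Finset ℕ) (f : ℕ → ℤ⟦X⟧) (d : ℕ)
    (h : ∀ i ∈ s, (X:ℤ⟦X⟧)^d ∣ f i - 1) : (X:ℤ⟦X⟧)^d ∣ (∏ i ∈ s, f i) - 1 := by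
  classical
  induction s using Finset.induction_on with
  | empty => simp
  | @insert a s' hni ih =>
    rw [Finset.prod_insert hni]
    have h1 : (X:ℤ⟦X⟧)^d ∣ f a - 1 := h a (Finset.mem_insert_self a s')
    have h2 : (X:ℤ⟦X⟧)^d ∣ (∏ i ∈ s', f i) - 1 := ih fun i hi => h i (Finset.mem_insert_of_mem hi)
    have e : f a * (∏ i ∈ s', f i) - 1
        = f a * ((∏ i ∈ s', f i) - 1) + (f a - 1) := by ring
    rw [e]
    exact dvd_add (Dvd.dvd.mul_left h2 _) h1

lemma mul_one_mod (u v : ℤ⟦X⟧) (d : ℕ) (hu : (X:ℤ⟦X⟧)^d ∣ u - 1) (hv : (X:ℤ⟦X⟧)^d ∣ v - 1) :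
    (X:ℤ⟦X⟧)^d ∣ u * v - 1 := by
  have e : u * v - 1 = u * (v - 1) + (u - 1) := by ring
  rw [e]
  exact dvd_add (Dvd.dvd.mul_left hv _) hu

lemma pow_one_mod (u : ℤ⟦X⟧) (m d : ℕ) (hu : (X:ℤ⟦X⟧)^d ∣ u - 1) :
    (X:ℤ⟦X⟧)^d ∣ u^m - 1 := by
  induction m with
  | zero => simp
  | succ m ih =>
    rw [pow_succ]
    exact mul_one_mod _ _ _ ih hu

lemma coeff_mul_one_mod (A B : ℤ⟦X⟧) (j d : ℕ) (hj : j < d) (h : (X:ℤ⟦X⟧)^d ∣ B - 1) :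
    PowerSeries.coeff (R := ℤ) j (A * B) = PowerSeries.coeff (R := ℤ) j A := by
  have e : A * B - A = A * (B - 1) := by ring
  have hd : (X:ℤ⟦X⟧)^d ∣ A*B - A := by rw [e]; exact Dvd.dvd.mul_left h A
  have hc := (PowerSeries.X_pow_dvd_iff.mp hd) j hj
  rw [map_sub, sub_eq_zero] at hc
  exact hc

lemma inv_one_mod (f : ℤ⟦X⟧) (hf : constantCoeff (R := ℤ) f = 1) (d : ℕ) (h : (X:ℤ⟦X⟧)^d ∣ f - 1) :
    (X:ℤ⟦X⟧)^d ∣ PowerSeries.invOfUnit f 1 - 1 := by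
  have hmul : f * PowerSeries.invOfUnit f 1 = 1 := PowerSeries.mul_invOfUnit f 1 (by simp [hf])
  have e : PowerSeries.invOfUnit f 1 - 1
      = PowerSeries.invOfUnit f 1 * (1 - f) + (f * PowerSeries.invOfUnit f 1 - 1) := by ring
  rw [e, hmul, sub_self, add_zero]
  have h2 : (X:ℤ⟦X⟧)^d ∣ 1 - f := by
    have := dvd_neg.mpr h
    rwa [neg_sub] at this
  exact Dvd.dvd.mul_left h2 _

end PS

section Main

open Jac Finset

noncomputable def Fp (N : ℕ) : ℤ⟦X⟧ :=
  ∏ k ∈ Finset.Icc 1 N, ((1 - PowerSeries.X ^ (3 * k)) * (1 - PowerSeries.X ^ k) ^ 3)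

lemma constantCoeff_one_sub_pow (m e : ℕ) (hm : 1 ≤ m) :
    constantCoeff (R := ℤ) ((1 - (X:ℤ⟦X⟧) ^ m)^e) = 1 := by
  rw [map_pow, map_sub, map_one, map_pow, constantCoeff_X, zero_pow (by omega), sub_zero, one_pow]

lemma constantCoeff_Fp (N : ℕ) : constantCoeff (R := ℤ) (Fp N) = 1 := by
  rw [Fp, map_prod]
  apply Finset.prod_eq_one
  intro k hk
  rw [Finset.mem_Icc] at hk
  rw [map_mul]
  have h1 := constantCoeff_one_sub_pow (3*k) 1 (by omega)
  have h2 := constantCoeff_one_sub_pow k 3 (by omega)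
  rw [pow_one] at h1
  rw [h1, h2, one_mul]

lemma one_sub_xpow_one_mod (m d : ℕ) (h : d ≤ m) :
    (X:ℤ⟦X⟧)^d ∣ (1 - (X:ℤ⟦X⟧)^m) - 1 := by
  have e : (1 - (X:ℤ⟦X⟧)^m) - 1 = -(X^m) := by ring
  rw [e]
  exact dvd_neg.mpr (pow_dvd_pow X h)

lemma factor_one_mod (k d : ℕ) (hdk : d ≤ k) :
    (X:ℤ⟦X⟧)^d ∣ (1 - X^(3*k)) * (1-X^k)^3 - 1 :=
  mul_one_mod _ _ _ (one_sub_xpow_one_mod (3*k) d (by omega))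
    (pow_one_mod _ 3 _ (one_sub_xpow_one_mod k d hdk))

lemma tail_Fp_one_mod (j N : ℕ) :
    (X:ℤ⟦X⟧)^(j+1) ∣ (∏ k ∈ Finset.Ioc j N, ((1 - (X:ℤ⟦X⟧)^(3*k)) * (1-X^k)^3)) - 1 := by
  apply prod_one_mod
  intro k hk
  rw [Finset.mem_Ioc] at hk
  exact factor_one_mod k (j+1) (by omega)

lemma Fp_split (j N : ℕ) (hj : j ≤ N) :
    Fp N = Fp j * ∏ k ∈ Finset.Ioc j N, ((1 - (X:ℤ⟦X⟧)^(3*k)) * (1-X^k)^3) := by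
  have hIcc : ∀ m : ℕ, Finset.Icc 1 m = Finset.Ioc 0 m := fun m => Finset.Icc_add_one_left_eq_Ioc 0 m
  rw [Fp, Fp, hIcc, hIcc]
  exact (Finset.prod_Ioc_consecutive _ (Nat.zero_le j) hj).symm

lemma inverse_unique (f g h : ℤ⟦X⟧) (hg : f * g = 1) (hh : f * h = 1) : g = h := by
  calc g = g * (f * h) := by rw [hh, mul_one]
    _ = h * (f * g) := by ring
    _ = h := by rw [hg, mul_one]

lemma coeff_inv_Fp (j N : ℕ) (hj : j ≤ N) :
    PowerSeries.coeff (R := ℤ) j (PowerSeries.invOfUnit (Fp N) 1) = a j := by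
  set T := ∏ k ∈ Finset.Ioc j N, ((1 - (X:ℤ⟦X⟧)^(3*k)) * (1-X^k)^3) with hT
  have hTc : constantCoeff (R := ℤ) T = 1 := by
    rw [hT, map_prod]
    apply Finset.prod_eq_one
    intro k hk
    rw [Finset.mem_Ioc] at hk
    rw [map_mul]
    have h1 := constantCoeff_one_sub_pow (3*k) 1 (by omega)
    have h2 := constantCoeff_one_sub_pow k 3 (by omega)
    rw [pow_one] at h1
    rw [h1, h2, one_mul]
  have m1 : Fp N * PowerSeries.invOfUnit (Fp N) 1 = 1 :=
    PowerSeries.mul_invOfUnit _ 1 (by rw [constantCoeff_Fp]; rfl)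
  have m2 : Fp N * (PowerSeries.invOfUnit (Fp j) 1 * PowerSeries.invOfUnit T 1) = 1 := by
    rw [Fp_split j N hj, ← hT]
    have i1 : Fp j * PowerSeries.invOfUnit (Fp j) 1 = 1 :=
      PowerSeries.mul_invOfUnit _ 1 (by rw [constantCoeff_Fp]; rfl)
    have i2 : T * PowerSeries.invOfUnit T 1 = 1 :=
      PowerSeries.mul_invOfUnit _ 1 (by rw [hTc]; rfl)
    calc Fp j * T * (PowerSeries.invOfUnit (Fp j) 1 * PowerSeries.invOfUnit T 1)
        = (Fp j * PowerSeries.invOfUnit (Fp j) 1) * (T * PowerSeries.invOfUnit T 1) := by ring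
      _ = 1 := by rw [i1, i2, mul_one]
  have heq : PowerSeries.invOfUnit (Fp N) 1
      = PowerSeries.invOfUnit (Fp j) 1 * PowerSeries.invOfUnit T 1 :=
    inverse_unique (Fp N) _ _ m1 m2
  rw [heq, coeff_mul_one_mod _ _ j (j+1) (by omega)
    (inv_one_mod T hTc (j+1) (tail_Fp_one_mod j N))]
  rfl

end Main

section GPart

open Jac Finset

lemma P_split {R : Type*} [CommRing R] (x : R) (r M : ℕ) (h : r ≤ M) :
    Jac.P x M = Jac.P x r * ∏ k ∈ Finset.Ioc r M, (1 - x^k) := by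
  have hIcc : ∀ m : ℕ, Finset.Icc 1 m = Finset.Ioc 0 m := fun m => Finset.Icc_add_one_left_eq_Ioc 0 m
  rw [Jac.P, Jac.P, hIcc, hIcc]
  exact (Finset.prod_Ioc_consecutive _ (Nat.zero_le r) h).symm

lemma tail_P_one_mod (r M : ℕ) :
    (X:ℤ⟦X⟧)^(9*(r+1)) ∣ (∏ k ∈ Finset.Ioc r M, (1 - ((X:ℤ⟦X⟧)^9)^k)) - 1 := by
  apply prod_one_mod
  intro k hk
  rw [Finset.mem_Ioc] at hk
  rw [← pow_mul]
  exact one_sub_xpow_one_mod (9*k) _ (by omega)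

lemma poch_one_mod (M r : ℕ) (hr : r ≤ 2*M) :
    (X:ℤ⟦X⟧)^(9*(2*M-r+1)) ∣ Jac.B ((X:ℤ⟦X⟧)^9) (2*M) r * Jac.P ((X:ℤ⟦X⟧)^9) r - 1 := by
  rw [Jac.poch _ (2*M) r hr]
  apply prod_one_mod
  intro i hi
  rw [Finset.mem_Icc] at hi
  rw [← pow_mul]
  exact one_sub_xpow_one_mod (9*i) _ (by omega)

lemma PB_one_mod (M r : ℕ) (hr : r ≤ 2*M) :
    (X:ℤ⟦X⟧)^(9*(min r (2*M-r) + 1)) ∣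
      Jac.P ((X:ℤ⟦X⟧)^9) M * Jac.B ((X:ℤ⟦X⟧)^9) (2*M) r - 1 := by
  set x : ℤ⟦X⟧ := (X:ℤ⟦X⟧)^9 with hx
  rcases le_or_gt r M with h | h
  · have hmin : min r (2*M - r) = r := by omega
    rw [hmin]
    have hsp := P_split x r M h
    have h1 : (X:ℤ⟦X⟧)^(9*(r+1)) ∣ Jac.B x (2*M) r * Jac.P x r - 1 :=
      dvd_trans (pow_dvd_pow X (by omega : 9*(r+1) ≤ 9*(2*M-r+1))) (poch_one_mod M r hr)
    have h2 : (X:ℤ⟦X⟧)^(9*(r+1)) ∣ (∏ k ∈ Finset.Ioc r M, (1 - x^k)) - 1 := tail_P_one_mod r M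
    have h3 := mul_one_mod _ _ _ h1 h2
    have e : Jac.P x M * Jac.B x (2*M) r - 1
        = Jac.B x (2*M) r * Jac.P x r * (∏ k ∈ Finset.Ioc r M, (1 - x^k)) - 1 := by
      rw [hsp]; ring
    rw [e]
    exact h3
  · have hmin : min r (2*M-r) = 2*M - r := by omega
    rw [hmin]
    have hsp := P_split x M r (le_of_lt h)
    have h1 := poch_one_mod M r hr
    have h2 : (X:ℤ⟦X⟧)^(9*(2*M-r+1)) ∣ (∏ k ∈ Finset.Ioc M r, (1 - x^k)) - 1 :=
      dvd_trans (pow_dvd_pow X (by omega : 9*(2*M-r+1) ≤ 9*(M+1))) (tail_P_one_mod M r)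
    have e : Jac.P x M * Jac.B x (2*M) r - 1
        = (Jac.B x (2*M) r * Jac.P x r - 1)
          - Jac.P x M * Jac.B x (2*M) r * ((∏ k ∈ Finset.Ioc M r, (1 - x^k)) - 1) := by
      rw [hsp]; ring
    rw [e]
    exact dvd_sub h1 (Dvd.dvd.mul_left h2 _)

lemma u_one_mod (M r : ℕ) (hr : r ≤ 2*M) :
    (X:ℤ⟦X⟧)^(min (9*(min r (2*M-r)+1)) (9*M)) ∣
      (1 - ((X:ℤ⟦X⟧)^9)^M) * Jac.P ((X:ℤ⟦X⟧)^9) M * Jac.B ((X:ℤ⟦X⟧)^9) (2*M) r - 1 := by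
  set x : ℤ⟦X⟧ := (X:ℤ⟦X⟧)^9 with hx
  have e : (1 - x^M) * Jac.P x M * Jac.B x (2*M) r - 1
      = (Jac.P x M * Jac.B x (2*M) r - 1) - x^M * (Jac.P x M * Jac.B x (2*M) r) := by ring
  rw [e]
  apply dvd_sub
  · exact dvd_trans (pow_dvd_pow X (Nat.min_le_left _ _)) (PB_one_mod M r hr)
  · have : (X:ℤ⟦X⟧)^(min (9*(min r (2*M-r)+1)) (9*M)) ∣ x^M := by
      rw [hx, ← pow_mul]
      exact pow_dvd_pow X (Nat.min_le_right _ _)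
    exact Dvd.dvd.mul_right this _

end GPart

section GCoeff

open Jac Finset

lemma coeff_term (M i r : ℕ) (hM : 1 ≤ M) (hi : i < 9*M) (hr : r ∈ Finset.range (2*M+1)) :
    PowerSeries.coeff (R := ℤ) i ((r : ℤ⟦X⟧) *
        ((1 - ((X:ℤ⟦X⟧)^9)^M) * Jac.P ((X:ℤ⟦X⟧)^9) M * Jac.c ((X:ℤ⟦X⟧)^9) M r))
      = (-1)^(r+M) * (r:ℤ) * (if i = 9 * tau r M then 1 else 0) := by
  rw [Finset.mem_range] at hr
  set x : ℤ⟦X⟧ := (X:ℤ⟦X⟧)^9 with hx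
  set u : ℤ⟦X⟧ := (1 - x^M) * Jac.P x M * Jac.B x (2*M) r with hu
  have e : (r : ℤ⟦X⟧) * ((1 - x^M) * Jac.P x M * Jac.c x M r)
      = PowerSeries.C (R := ℤ) ((-1)^(r+M) * (r:ℤ)) * ((X:ℤ⟦X⟧)^(9 * tau r M) * u) := by
    rw [Jac.c, hu]
    have c1 : PowerSeries.C (R := ℤ) ((r:ℕ):ℤ) = ((r:ℕ) : ℤ⟦X⟧) := map_natCast (PowerSeries.C (R := ℤ)) r
    have c2 : PowerSeries.C (R := ℤ) ((-1:ℤ)^(r+M)) = ((-1:ℤ⟦X⟧))^(r+M) := by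
      rw [map_pow, map_neg, map_one]
    rw [map_mul, c1, c2, pow_mul]
    ring
  rw [e, PowerSeries.coeff_C_mul, PowerSeries.coeff_X_pow_mul']
  congr 1
  by_cases hle : 9 * tau r M ≤ i
  · rw [if_pos hle]
    have hd : (X:ℤ⟦X⟧)^(min (9*(min r (2*M-r)+1)) (9*M)) ∣ u - 1 := u_one_mod M r (by omega)
    have hlt : i - 9 * tau r M < min (9*(min r (2*M-r)+1)) (9*M) := by
      have hb := bound_min r M (by omega)
      omega
    have h1 : PowerSeries.coeff (R := ℤ) (i - 9*tau r M) u = PowerSeries.coeff (R := ℤ) (i - 9*tau r M) 1 := by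
      have := coeff_mul_one_mod 1 u (i - 9*tau r M) _ hlt hd
      rwa [one_mul] at this
    rw [h1, PowerSeries.coeff_one]
    by_cases he : i = 9 * tau r M
    · rw [if_pos he, if_pos (by omega)]
    · rw [if_neg he, if_neg (by omega)]
  · rw [if_neg hle, if_neg (by omega)]

lemma coeff_G_sum (M i : ℕ) (hM : 1 ≤ M) (hi : i < 9*M) :
    PowerSeries.coeff (R := ℤ) i ((Jac.P ((X:ℤ⟦X⟧)^9) M)^3)
      = ∑ r ∈ Finset.range (2*M+1), (-1)^(r+M) * (r:ℤ) * (if i = 9 * tau r M then 1 else 0) := by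
  rw [Jac.P_cubed _ M hM, map_sum]
  exact Finset.sum_congr rfl fun r hr => coeff_term M i r hM hi hr

end GCoeff

section Supp

open Jac Finset

lemma neg_one_pow_mod2 (a b : ℕ) (h : a % 2 = b % 2) : (-1:ℤ)^a = (-1:ℤ)^b := by
  rcases Nat.even_or_odd a with ha | ha
  · have hb : Even b := by rcases ha with ⟨m, hm⟩; exact ⟨b/2, by omega⟩
    rw [Even.neg_one_pow ha, Even.neg_one_pow hb]
  · have hb : Odd b := by rcases ha with ⟨m, hm⟩; exact ⟨b/2, by omega⟩
    rw [Odd.neg_one_pow ha, Odd.neg_one_pow hb]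

lemma sum_supp (M i : ℕ) (hM : 1 ≤ M) (hi : i < 9*M) :
    (5:ℤ) ∣ (∑ r ∈ Finset.range (2*M+1), (-1)^(r+M) * (r:ℤ) * (if i = 9 * tau r M then 1 else 0))
    ∨ ∃ c : ℕ, i = 45*c ∨ i = 45*c + 9 := by
  by_cases hex : ∃ k : ℕ, i = 9 * Jac.t k
  · obtain ⟨k, hk⟩ := hex
    have hkM : Jac.t k < M := by omega
    have hkM' : k < M := lt_of_le_of_lt (t_ge k) hkM
    by_cases h5 : k % 5 = 2
    · left
      have hchar : ∀ r : ℕ, (i = 9 * tau r M) ↔ (r = M + k ∨ r = M - 1 - k) := by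
        intro r
        constructor
        · intro h
          have h9 : tau r M = Jac.t k := by omega
          rcases le_or_gt M r with hc | hc
          · rw [tau_ge r M hc] at h9
            have := t_strictMono.injective h9
            left; omega
          · rw [tau_lt r M hc] at h9
            have := t_strictMono.injective h9
            right; omega
        · rintro (h | h)
          · subst h
            rw [tau_ge (M+k) M (by omega), show M+k-M = k by omega]
            exact hk
          · subst h
            rw [tau_lt (M-1-k) M (by omega), show M-(M-1-k)-1 = k by omega]
            exact hk
      have hsplit : ∀ r ∈ Finset.range (2*M+1),
          (-1:ℤ)^(r+M) * (r:ℤ) * (if i = 9*tau r M then 1 else 0)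
          = (if r = M+k then (-1:ℤ)^(r+M)*(r:ℤ) else 0)
            + (if r = M-1-k then (-1:ℤ)^(r+M)*(r:ℤ) else 0) := by
        intro r _
        by_cases h1 : r = M+k
        · rw [if_pos ((hchar r).mpr (Or.inl h1)), if_pos h1, if_neg (by omega)]
          ring
        · by_cases h2 : r = M-1-k
          · rw [if_pos ((hchar r).mpr (Or.inr h2)), if_neg h1, if_pos h2]
            ring
          · rw [if_neg (fun hc => by rcases (hchar r).mp hc with h|h; exacts [h1 h, h2 h]),
              if_neg h1, if_neg h2]
            ring
      rw [Finset.sum_congr rfl hsplit, Finset.sum_add_distrib,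
        Finset.sum_ite_eq' (Finset.range (2*M+1)) (M+k) (fun r => (-1:ℤ)^(r+M)*(r:ℤ)),
        Finset.sum_ite_eq' (Finset.range (2*M+1)) (M-1-k) (fun r => (-1:ℤ)^(r+M)*(r:ℤ)),
        if_pos (by simp; omega), if_pos (by simp; omega)]
      have sign1 : (-1:ℤ)^(M+k+M) = (-1:ℤ)^k := neg_one_pow_mod2 _ _ (by omega)
      have sign2 : (-1:ℤ)^(M-1-k+M) = -(-1:ℤ)^k := by
        have h := neg_one_pow_mod2 (M-1-k+M) (k+1) (by omega)
        rw [h, pow_succ]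
        ring
      rw [sign1, sign2]
      have hc1 : ((M+k:ℕ):ℤ) = (M:ℤ)+(k:ℤ) := by push_cast; ring
      have hc2 : ((M-1-k:ℕ):ℤ) = (M:ℤ)-1-(k:ℤ) := by omega
      rw [hc1, hc2]
      obtain ⟨q, hq⟩ : ∃ q, k = 5*q+2 := ⟨k/5, by omega⟩
      refine ⟨(-1:ℤ)^k * (2*(q:ℤ)+1), ?_⟩
      subst hq
      push_cast
      ring
    · right
      rcases t_mod5 k h5 with h | h
      · exact ⟨Jac.t k / 5, Or.inl (by omega)⟩
      · exact ⟨Jac.t k / 5, Or.inr (by omega)⟩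
  · left
    have hz : ∀ r ∈ Finset.range (2*M+1),
        (-1:ℤ)^(r+M) * (r:ℤ) * (if i = 9 * tau r M then 1 else 0) = 0 := by
      intro r _
      rw [if_neg, mul_zero]
      intro hc
      rcases le_or_gt M r with h | h
      · exact hex ⟨r - M, by rwa [tau_ge r M h] at hc⟩
      · exact hex ⟨M - r - 1, by rwa [tau_lt r M h] at hc⟩
    rw [Finset.sum_eq_zero hz]
    exact dvd_zero 5

end Supp

section Final

open Jac Finset

lemma G_eq (M : ℕ) : (∏ k ∈ Finset.Icc 1 M, (1 - (X:ℤ⟦X⟧)^(9*k))^3)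
    = (Jac.P ((X:ℤ⟦X⟧)^9) M)^3 := by
  rw [Jac.P, ← Finset.prod_pow]
  exact Finset.prod_congr rfl fun k _ => by rw [← pow_mul]


theorem cphi3'_cong_37
    (ha6 : ∀ n : ℕ, a (15 * n + 6) ≡ 0 [ZMOD 5])
    (ha12 : ∀ n : ℕ, a (15 * n + 12) ≡ 0 [ZMOD 5]) :
    ∀ n : ℕ, cphi3' (45 * n + 37) ≡ 0 [ZMOD 5] := by
  intro n
  rw [Int.ModEq]
  simp only [Int.zero_emod]
  rw [← Int.dvd_iff_emod_eq_zero]  -- may need fixing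
  set M : ℕ := 45 * n + 37 with hMdef
  have hM1 : 1 ≤ M := by omega
  have key : cphi3' M = 9 * ∑ p ∈ Finset.HasAntidiagonal.antidiagonal (45*n+36),
      (PowerSeries.coeff (R := ℤ) p.1 ((Jac.P ((X:ℤ⟦X⟧)^9) M)^3))
        * (PowerSeries.coeff (R := ℤ) p.2 (PowerSeries.invOfUnit (Fp M) 1)) := by
    show PowerSeries.coeff (R := ℤ) M ((9 : ℤ⟦X⟧) * X *
      (∏ k ∈ Finset.Icc 1 M, (1 - X ^ (9 * k)) ^ 3) *
      PowerSeries.invOfUnit (Fp M) 1) = _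
    have h9 : (9 : ℤ⟦X⟧) = PowerSeries.C (R := ℤ) 9 := by
      norm_num
    have e : (9 : ℤ⟦X⟧) * X * (∏ k ∈ Finset.Icc 1 M, (1 - X ^ (9 * k)) ^ 3) *
        PowerSeries.invOfUnit (Fp M) 1
        = X * (PowerSeries.C (R := ℤ) 9 * ((Jac.P ((X:ℤ⟦X⟧)^9) M)^3
            * PowerSeries.invOfUnit (Fp M) 1)) := by
      rw [← G_eq, h9]
      ring
    rw [e, show M = (45*n+36)+1 by omega, PowerSeries.coeff_succ_X_mul,
      PowerSeries.coeff_C_mul, PowerSeries.coeff_mul]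
  rw [key]
  apply Dvd.dvd.mul_left
  apply Finset.dvd_sum
  intro p hp
  rw [Finset.HasAntidiagonal.mem_antidiagonal] at hp
  have hp1 : p.1 < 9*M := by omega
  rcases sum_supp M p.1 hM1 hp1 with hdvd | ⟨c, hc | hc⟩
  · rw [← coeff_G_sum M p.1 hM1 hp1] at hdvd
    exact Dvd.dvd.mul_right hdvd _
  · -- p.1 = 45*c, so p.2 = 45*(n-c)+36 = 15*(3*(n-c)+2)+6
    have hcn : c ≤ n := by omega
    have hj : p.2 = 15*(3*(n-c)+2)+6 := by omega
    have hH : PowerSeries.coeff (R := ℤ) p.2 (PowerSeries.invOfUnit (Fp M) 1) = a p.2 :=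
      coeff_inv_Fp p.2 M (by omega)
    have ha := ha6 (3*(n-c)+2)
    rw [Int.ModEq] at ha
    simp only [Int.zero_emod] at ha
    rw [← Int.dvd_iff_emod_eq_zero] at ha
    rw [hH, hj]
    exact Dvd.dvd.mul_left ha _
  · have hcn : c ≤ n := by omega
    have hj : p.2 = 15*(3*(n-c)+1)+12 := by omega
    have hH : PowerSeries.coeff (R := ℤ) p.2 (PowerSeries.invOfUnit (Fp M) 1) = a p.2 :=
      coeff_inv_Fp p.2 M (by omega)
    have ha := ha12 (3*(n-c)+1)
    rw [Int.ModEq] at ha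
    simp only [Int.zero_emod] at ha
    rw [← Int.dvd_iff_emod_eq_zero] at ha
    rw [hH, hj]
    exact Dvd.dvd.mul_left ha _


end Final
end

section
/- For every nonnegative integer n and every integer k ≥ 0, if 45n+7 - 1 - (9k^2+9k)/2 ≥ 0 and 2k+1 ≢ 0 (mod 5), then 45n+7 - 1 - (9k^2+9k)/2 is congruent to 6 or 12 modulo 15. -/
theorem index_mod_fifteen_seven (n k : ℕ)
    (hnonneg : 1 + (9 * k ^ 2 + 9 * k) / 2 ≤ 45 * n + 7)
    (hk : ¬ (5 ∣ 2 * k + 1)) :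
    (45 * n + 7 - 1 - (9 * k ^ 2 + 9 * k) / 2) % 15 = 6 ∨
      (45 * n + 7 - 1 - (9 * k ^ 2 + 9 * k) / 2) % 15 = 12 := by
  set m := (9 * k ^ 2 + 9 * k) / 2 with hmdef
  have heven : 2 ∣ 9 * k ^ 2 + 9 * k := by
    rcases Nat.even_or_odd k with ⟨t, ht⟩ | ⟨t, ht⟩ <;> subst ht
    · exact ⟨18 * t ^ 2 + 9 * t, by ring⟩
    · exact ⟨18 * t ^ 2 + 27 * t + 9, by ring⟩
  have hm : 2 * m = 9 * k ^ 2 + 9 * k := by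
    rw [hmdef, Nat.mul_div_cancel' heven]
  obtain ⟨q, r, hr5, hkqr⟩ : ∃ q r, r < 5 ∧ k = 5 * q + r := ⟨k / 5, k % 5, Nat.mod_lt _ (by norm_num), (Nat.div_add_mod k 5).symm⟩
  have hqeven : 2 ∣ q * (5 * q + 1) := by
    rcases Nat.even_or_odd q with ⟨t, ht⟩ | ⟨t, ht⟩ <;> subst ht
    · exact ⟨10 * t ^ 2 + t, by ring⟩
    · exact ⟨10 * t ^ 2 + 11 * t + 3, by ring⟩
  obtain ⟨s, hs⟩ := hqeven
  have hsplit : 9 * k ^ 2 + 9 * k = 9 * r ^ 2 + 9 * r + 30 * (3 * s + 3 * q * r) := by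
    subst hkqr
    have : 9 * (5 * q + r) ^ 2 + 9 * (5 * q + r)
        = 9 * r ^ 2 + 9 * r + 45 * (q * (5 * q + 1)) + 90 * (q * r) := by ring
    rw [this, hs]; ring
  interval_cases r <;> omega
end
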